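/- arXiv:math-ph/0304016 — 6 statements merged into one kernel-verified Lean document; each statement's English description precedes it below -/
import Mathlib

section
/- Let (X, μ) be a measure space and let f₁,…,f_k and g₁,…,g_k be square-integrable functions on X. Then the k-fold integral of det(fᵢ(xⱼ))·det(gᵢ(xⱼ)) with respect to μ(x₁)⋯μ(x_k) equals k! times det(∫_X fᵢ(x)gⱼ(x) dμ(x)). -/
open MeasureTheory Matrix

private lemma memL2_mul_integrable {X : Type*} [MeasurableSpace X] {μ : Measure X} {f g : X → ℝ}
    (hf : MemLp f 2 μ) (hg : MemLp g 2 μ) : Integrable (fun t => f t * g t) μ := by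
  have h := L2.integrable_inner (𝕜 := ℝ) (hf.toLp f) (hg.toLp g)
  refine h.congr ?_
  filter_upwards [hf.coeFn_toLp, hg.coeFn_toLp] with t h1 h2
  simp [h1, h2, RCLike.inner_apply, mul_comm]

private lemma perm_sum_det {k : ℕ} (A : Matrix (Fin k) (Fin k) ℝ) :
    ∑ σ : Equiv.Perm (Fin k), ∑ τ : Equiv.Perm (Fin k),
      (((Equiv.Perm.sign σ : ℤ) : ℝ) * ((Equiv.Perm.sign τ : ℤ) : ℝ))
        * ∏ j, A (σ j) (τ j) = (k.factorial : ℝ) * A.det := by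
  have hinner : ∀ σ : Equiv.Perm (Fin k),
      ∑ τ : Equiv.Perm (Fin k),
        (((Equiv.Perm.sign σ : ℤ) : ℝ) * ((Equiv.Perm.sign τ : ℤ) : ℝ))
          * ∏ j, A (σ j) (τ j) = A.det := by
    intro σ
    rw [← Matrix.det_transpose A, Matrix.det_apply']
    refine Fintype.sum_equiv (Equiv.mulRight σ⁻¹) _ _ fun τ => ?_
    simp only [Equiv.coe_mulRight]
    have hs : ((Equiv.Perm.sign (τ * σ⁻¹) : ℤ) : ℝ)
        = ((Equiv.Perm.sign σ : ℤ) : ℝ) * ((Equiv.Perm.sign τ : ℤ) : ℝ) := by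
      rw [Equiv.Perm.sign_mul, Equiv.Perm.sign_inv]
      push_cast
      ring
    rw [hs]
    congr 1
    rw [← Equiv.prod_comp σ fun i => Aᵀ ((τ * σ⁻¹) i) i]
    refine Finset.prod_congr rfl fun j _ => ?_
    simp [Equiv.Perm.mul_apply]
  simp_rw [hinner]
  rw [Finset.sum_const, Finset.card_univ, Fintype.card_perm, Fintype.card_fin, nsmul_eq_mul]

/-- Andréief's integral version of the Binet–Cauchy formula. -/
theorem andreief_formula {X : Type*} [MeasurableSpace X] (μ : Measure X) [SigmaFinite μ]
    (k : ℕ) (f g : Fin k → X → ℝ)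
    (hf : ∀ i, MemLp (f i) 2 μ) (hg : ∀ i, MemLp (g i) 2 μ) :
    Integrable (fun x : Fin k → X =>
      (Matrix.of fun i j => f i (x j)).det * (Matrix.of fun i j => g i (x j)).det)
      (Measure.pi fun _ => μ) ∧
    ∫ x : Fin k → X,
        (Matrix.of fun i j => f i (x j)).det * (Matrix.of fun i j => g i (x j)).det
        ∂(Measure.pi fun _ => μ)
      = (k.factorial : ℝ) * (Matrix.of fun i j => ∫ t, f i t * g j t ∂μ).det := by
  classical
  letI : MeasureSpace X := ⟨μ⟩
  haveI : SigmaFinite (volume : Measure X) := ‹SigmaFinite μ›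
  have hvol : (Measure.pi fun _ : Fin k => μ) = (volume : Measure (Fin k → X)) := rfl
  -- pointwise expansion
  have hexp : ∀ x : Fin k → X,
      (Matrix.of fun i j => f i (x j)).det * (Matrix.of fun i j => g i (x j)).det
        = ∑ σ : Equiv.Perm (Fin k), ∑ τ : Equiv.Perm (Fin k),
            (((Equiv.Perm.sign σ : ℤ) : ℝ) * ((Equiv.Perm.sign τ : ℤ) : ℝ))
              * ∏ j, (f (σ j) (x j) * g (τ j) (x j)) := by
    intro x
    rw [Matrix.det_apply', Matrix.det_apply', Finset.sum_mul_sum]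
    refine Finset.sum_congr rfl fun σ _ => Finset.sum_congr rfl fun τ _ => ?_
    rw [Finset.prod_mul_distrib]
    simp only [Matrix.of_apply]
    ring
  -- integrability of each summand
  have hint : ∀ σ τ : Equiv.Perm (Fin k),
      Integrable (fun x : Fin k → X => ∏ j, (f (σ j) (x j) * g (τ j) (x j)))
        (Measure.pi fun _ => μ) := by
    intro σ τ
    rw [hvol]
    exact Integrable.fintype_prod (f := fun j t => f (σ j) t * g (τ j) t)
      fun j => memL2_mul_integrable (hf (σ j)) (hg (τ j))
  have hInt : Integrable (fun x : Fin k → X =>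
      (Matrix.of fun i j => f i (x j)).det * (Matrix.of fun i j => g i (x j)).det)
      (Measure.pi fun _ => μ) := by
    have : Integrable (fun x : Fin k → X =>
        ∑ σ : Equiv.Perm (Fin k), ∑ τ : Equiv.Perm (Fin k),
          (((Equiv.Perm.sign σ : ℤ) : ℝ) * ((Equiv.Perm.sign τ : ℤ) : ℝ))
            * ∏ j, (f (σ j) (x j) * g (τ j) (x j))) (Measure.pi fun _ => μ) :=
      integrable_finset_sum _ fun σ _ => integrable_finset_sum _ fun τ _ =>
        (hint σ τ).const_mul _
    exact this.congr (Filter.Eventually.of_forall fun x => (hexp x).symm)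
  refine ⟨hInt, ?_⟩
  have h1 : ∫ x : Fin k → X,
      (Matrix.of fun i j => f i (x j)).det * (Matrix.of fun i j => g i (x j)).det
      ∂(Measure.pi fun _ => μ)
      = ∑ σ : Equiv.Perm (Fin k), ∑ τ : Equiv.Perm (Fin k),
          (((Equiv.Perm.sign σ : ℤ) : ℝ) * ((Equiv.Perm.sign τ : ℤ) : ℝ))
            * ∫ x : Fin k → X, ∏ j, (f (σ j) (x j) * g (τ j) (x j))
                ∂(Measure.pi fun _ => μ) := by
    rw [integral_congr_ae (Filter.Eventually.of_forall hexp)]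
    rw [integral_finset_sum _ fun σ _ => integrable_finset_sum _ fun τ _ =>
      (hint σ τ).const_mul _]
    refine Finset.sum_congr rfl fun σ _ => ?_
    rw [integral_finset_sum _ fun τ _ => (hint σ τ).const_mul _]
    exact Finset.sum_congr rfl fun τ _ => integral_const_mul _ _
  have h2 : ∀ σ τ : Equiv.Perm (Fin k),
      ∫ x : Fin k → X, ∏ j, (f (σ j) (x j) * g (τ j) (x j)) ∂(Measure.pi fun _ => μ)
        = ∏ j, ∫ t, f (σ j) t * g (τ j) t ∂μ := by
    intro σ τ
    rw [hvol]
    exact integral_fintype_prod_eq_prod (ι := Fin k) (fun j t => f (σ j) t * g (τ j) t)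
  simp_rw [h1, h2]
  have := perm_sum_det (Matrix.of fun i j => ∫ t, f i t * g j t ∂μ)
  simpa using this
end

section
/- Heine's formula: the N-th monic orthogonal polynomial with respect to a measure α equals the average of the characteristic polynomial ∏ᵢ(μ − xᵢ) over the eigenvalue distribution with density Δ(x)²dα(x), i.e. π_N(μ) = (1/Z_N) ∫⋯∫ ∏_{i=1}^N (μ − xᵢ) Δ(x)² dα(x₁)⋯dα(x_N). -/
open MeasureTheory Polynomial Finset

/-- The Vandermonde product `∏_{i>j} (x i - x j)`. -/
noncomputable def Vand {n : ℕ} (x : Fin n → ℝ) : ℝ :=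
  ∏ i : Fin n, ∏ j ∈ Finset.Iio i, (x i - x j)


lemma Vand_eq_det {n : ℕ} (x : Fin n → ℝ) : Vand x = (Matrix.vandermonde x).det := by
  rw [Matrix.det_vandermonde, Vand, Finset.prod_sigma', Finset.prod_sigma']
  refine Finset.prod_nbij' (fun p => ⟨p.2, p.1⟩) (fun p => ⟨p.2, p.1⟩) ?_ ?_ ?_ ?_ ?_ <;>
    simp [Finset.mem_sigma]

lemma integrable_eval (α : Measure ℝ) (hmom : ∀ k : ℕ, Integrable (fun t => |t| ^ k) α)
    (p : ℝ[X]) : Integrable (fun t => p.eval t) α := by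
  have hpow : ∀ k : ℕ, Integrable (fun t : ℝ => t ^ k) α := fun k =>
    (hmom k).mono' (measurable_id.pow_const k).aestronglyMeasurable
      (Filter.Eventually.of_forall fun t => by simp [Real.norm_eq_abs, abs_pow])
  have hrw : (fun t => p.eval t) =
      fun t => ∑ k ∈ Finset.range (p.natDegree + 1), p.coeff k * t ^ k := by
    funext t; rw [Polynomial.eval_eq_sum_range]
  rw [hrw]
  exact integrable_finset_sum _ fun k _ => (hpow k).const_mul _

lemma integral_pi_prod (α : Measure ℝ) [SigmaFinite α] {n : ℕ} (f : Fin n → ℝ → ℝ) :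
    ∫ x : Fin n → ℝ, ∏ i, f i (x i) ∂(Measure.pi fun _ => α) = ∏ i, ∫ t, f i t ∂α := by
  letI : MeasureSpace ℝ := ⟨α⟩
  haveI : SigmaFinite (volume : Measure ℝ) := ‹_›
  exact MeasureTheory.integral_fin_nat_prod_eq_prod f

lemma integrable_pi_prod (α : Measure ℝ) [SigmaFinite α] {n : ℕ} (f : Fin n → ℝ → ℝ)
    (hf : ∀ i, Integrable (f i) α) :
    Integrable (fun x : Fin n → ℝ => ∏ i, f i (x i)) (Measure.pi fun _ => α) := by
  letI : MeasureSpace ℝ := ⟨α⟩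
  haveI : SigmaFinite (volume : Measure ℝ) := ‹_›
  exact Integrable.fintype_prod hf

lemma integral_sum_prod {ι₁ ι₂ : Type*} [Fintype ι₁] [Fintype ι₂] (α : Measure ℝ)
    [SigmaFinite α]
    (hmom : ∀ k : ℕ, Integrable (fun t => |t| ^ k) α) {n : ℕ}
    (c : ι₁ → ι₂ → ℝ) (p q : ι₁ → ι₂ → Fin n → ℝ[X]) :
    ∫ x : Fin n → ℝ, ∑ a, ∑ b, c a b * ∏ i, ((p a b i).eval (x i) * (q a b i).eval (x i))
      ∂(Measure.pi fun _ => α)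
    = ∑ a, ∑ b, c a b * ∏ i, ∫ t, (p a b i).eval t * (q a b i).eval t ∂α := by
  have hint : ∀ a b i, Integrable (fun t => (p a b i).eval t * (q a b i).eval t) α := by
    intro a b i
    have := integrable_eval α hmom (p a b i * q a b i)
    simpa [Polynomial.eval_mul] using this
  have hI : ∀ (a : ι₁) (b : ι₂), Integrable
      (fun x : Fin n → ℝ => c a b * ∏ i, ((p a b i).eval (x i) * (q a b i).eval (x i)))
      (Measure.pi fun _ => α) :=
    fun a b => (integrable_pi_prod α _ (hint a b)).const_mul _
  rw [integral_finset_sum _ fun a _ => integrable_finset_sum _ fun b _ => hI a b]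
  refine Finset.sum_congr rfl fun a _ => ?_
  rw [integral_finset_sum _ fun b _ => hI a b]
  refine Finset.sum_congr rfl fun b _ => ?_
  rw [MeasureTheory.integral_const_mul, integral_pi_prod α (fun i t => (p a b i).eval t * (q a b i).eval t)]

noncomputable def extPerm {n : ℕ} (τ : Equiv.Perm (Fin n)) : Equiv.Perm (Fin (n + 1)) :=
  finSuccEquivLast.symm.permCongr τ.optionCongr

lemma extPerm_castSucc {n : ℕ} (τ : Equiv.Perm (Fin n)) (i : Fin n) :
    extPerm τ (Fin.castSucc i) = Fin.castSucc (τ i) := by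
  simp [extPerm, Equiv.permCongr_apply]

lemma extPerm_last {n : ℕ} (τ : Equiv.Perm (Fin n)) : extPerm τ (Fin.last n) = Fin.last n := by
  simp [extPerm, Equiv.permCongr_apply]

lemma sign_extPerm {n : ℕ} (τ : Equiv.Perm (Fin n)) :
    Equiv.Perm.sign (extPerm τ) = Equiv.Perm.sign τ := by
  rw [extPerm, Equiv.Perm.sign_permCongr, Equiv.optionCongr_sign]

lemma eq_extPerm {n : ℕ} (τ : Equiv.Perm (Fin n)) (σ : Equiv.Perm (Fin (n + 1)))
    (hσ : ∀ i : Fin n, σ (Fin.castSucc i) = Fin.castSucc (τ i)) : σ = extPerm τ := by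
  have hlast : σ (Fin.last n) = Fin.last n := by
    by_contra hne
    obtain ⟨j, hj⟩ := Fin.exists_castSucc_eq.mpr hne
    have h2 : σ (Fin.castSucc (τ.symm j)) = Fin.castSucc j := by
      rw [hσ, Equiv.apply_symm_apply]
    have h3 : Fin.castSucc (τ.symm j) = Fin.last n := σ.injective (h2.trans hj)
    exact (Fin.castSucc_lt_last _).ne h3
  refine Equiv.ext fun x => ?_
  induction x using Fin.lastCases with
  | last => rw [hlast, extPerm_last]
  | cast i => rw [hσ, extPerm_castSucc]

lemma prod_Iio_last {n : ℕ} (f : Fin (n + 1) → ℝ) :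
    ∏ j ∈ Finset.Iio (Fin.last n), f j = ∏ j : Fin n, f (Fin.castSucc j) := by
  refine (Finset.prod_bij (fun (a : Fin n) _ => Fin.castSucc a) ?_ ?_ ?_ ?_).symm
  · intro a _; rw [Finset.mem_Iio]; exact Fin.castSucc_lt_last a
  · intro a _ b _ h2; exact Fin.castSucc_injective n h2
  · intro b hb
    rw [Finset.mem_Iio] at hb
    exact ⟨b.castPred (ne_of_lt hb), Finset.mem_univ _, by simp⟩
  · intros; rfl

lemma prod_Iio_castSucc {n : ℕ} (i : Fin n) (f : Fin (n + 1) → ℝ) :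
    ∏ j ∈ Finset.Iio (Fin.castSucc i), f j = ∏ j ∈ Finset.Iio i, f (Fin.castSucc j) := by
  refine (Finset.prod_bij (fun (a : Fin n) _ => Fin.castSucc a) ?_ ?_ ?_ ?_).symm
  · intro a ha
    rw [Finset.mem_Iio] at ha ⊢
    exact Fin.castSucc_lt_castSucc_iff.mpr ha
  · intro a _ b _ h2; exact Fin.castSucc_injective n h2
  · intro b hb
    rw [Finset.mem_Iio] at hb
    have hb' : b ≠ Fin.last n := ne_of_lt (lt_of_lt_of_le hb (Fin.le_last _))
    refine ⟨b.castPred hb', ?_, by simp⟩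
    rw [Finset.mem_Iio, ← Fin.castSucc_lt_castSucc_iff]
    simpa using hb
  · intros; rfl

lemma vand_snoc {n : ℕ} (x : Fin n → ℝ) (μ : ℝ) :
    Vand (Fin.snoc x μ) = (∏ i, (μ - x i)) * Vand x := by
  rw [Vand, Fin.prod_univ_castSucc, prod_Iio_last]
  simp only [Fin.snoc_castSucc, Fin.snoc_last]
  rw [mul_comm]
  congr 1
  rw [Vand]
  refine Finset.prod_congr rfl fun i _ => ?_
  rw [prod_Iio_castSucc]
  simp only [Fin.snoc_castSucc]


/-- Heine's formula: the `N`-th monic orthogonal polynomial is the average of the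
characteristic polynomial over the unitary-ensemble eigenvalue measure. -/
theorem heine_formula (α : Measure ℝ)
    (hmom : ∀ k : ℕ, Integrable (fun t => |t| ^ k) α)
    (hposdef : ∀ p : Polynomial ℝ, p ≠ 0 → 0 < ∫ t, (p.eval t) ^ 2 ∂α)
    (π : ℕ → Polynomial ℝ)
    (hmonic : ∀ j, (π j).Monic) (hdeg : ∀ j, (π j).natDegree = j)
    (horth : ∀ j k, j ≠ k → ∫ t, (π j).eval t * (π k).eval t ∂α = 0)
    (N : ℕ) (Z : ℝ)
    (hZ : Z = ∫ x : Fin N → ℝ, (Vand x) ^ 2 ∂(Measure.pi fun _ => α))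
    (μ : ℝ) :
    (π N).eval μ =
      (1 / Z) * ∫ x : Fin N → ℝ, (∏ i, (μ - x i)) * (Vand x) ^ 2
        ∂(Measure.pi fun _ => α) := by
  haveI : IsFiniteMeasure α := by
    have h0 := hmom 0
    simp only [pow_zero] at h0
    rcases integrable_const_iff.mp h0 with h | h
    · exact absurd h one_ne_zero
    · exact h
  -- sign squared
  have hsq : ∀ {m : ℕ} (σ : Equiv.Perm (Fin m)),
      ((Equiv.Perm.sign σ : ℤ) : ℝ) * ((Equiv.Perm.sign σ : ℤ) : ℝ) = 1 := by
    intro m σ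
    rcases Int.units_eq_one_or (Equiv.Perm.sign σ) with hs | hs <;> rw [hs] <;> norm_num
  -- expansion of Vand as a permutation sum
  have key : ∀ {n : ℕ} (v : Fin n → ℝ), Vand v =
      ∑ σ : Equiv.Perm (Fin n), ((Equiv.Perm.sign σ : ℤ) : ℝ) *
        ∏ i, (π ((σ i : Fin n) : ℕ)).eval (v i) := by
    intro n v
    rw [Vand_eq_det v,
      Matrix.det_eval_matrixOfPolynomials_eq_det_vandermonde v (fun j => π (j : ℕ))
        (fun j => hdeg _) (fun j => hmonic _),
      ← Matrix.det_transpose, Matrix.det_apply']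
    refine Finset.sum_congr rfl fun σ _ => ?_
    simp [Matrix.transpose_apply]
  -- orthogonality data
  have horth' : ∀ a b : ℕ, a ≠ b → (∫ t, (π a).eval t * (π b).eval t ∂α) = 0 := horth
  have hdiag : ∀ a : ℕ, 0 < ∫ t, (π a).eval t * (π a).eval t ∂α := by
    intro a
    have := hposdef (π a) (hmonic a).ne_zero
    simpa [pow_two] using this
  set P : ℝ := ∏ i : Fin N, ∫ t, (π (i : ℕ)).eval t * (π (i : ℕ)).eval t ∂α with hP
  have hPpos : 0 < P := Finset.prod_pos fun i _ => hdiag _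
  set K : ℝ := (Fintype.card (Equiv.Perm (Fin N)) : ℝ) with hK
  have hKpos : 0 < K := by
    rw [hK]; exact_mod_cast Fintype.card_pos
  -- Z computation
  have hZint : ∀ x : Fin N → ℝ, Vand x ^ 2 =
      ∑ σ : Equiv.Perm (Fin N), ∑ τ : Equiv.Perm (Fin N),
        (((Equiv.Perm.sign σ : ℤ) : ℝ) * ((Equiv.Perm.sign τ : ℤ) : ℝ)) *
          ∏ i, ((π ((σ i : Fin N) : ℕ)).eval (x i) * (π ((τ i : Fin N) : ℕ)).eval (x i)) := by
    intro x
    rw [sq, key x, Finset.sum_mul_sum]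
    refine Finset.sum_congr rfl fun σ _ => Finset.sum_congr rfl fun τ _ => ?_
    rw [Finset.prod_mul_distrib]; ring
  have hZval : Z = K * P := by
    rw [hZ]
    simp only [hZint]
    rw [integral_sum_prod α hmom
      (fun σ τ => ((Equiv.Perm.sign σ : ℤ) : ℝ) * ((Equiv.Perm.sign τ : ℤ) : ℝ))
      (fun σ _ i => π ((σ i : Fin N) : ℕ)) (fun _ τ i => π ((τ i : Fin N) : ℕ))]
    have hrow : ∀ σ : Equiv.Perm (Fin N),
        (∑ τ : Equiv.Perm (Fin N),
          (((Equiv.Perm.sign σ : ℤ) : ℝ) * ((Equiv.Perm.sign τ : ℤ) : ℝ)) *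
            ∏ i, ∫ t, (π ((σ i : Fin N) : ℕ)).eval t * (π ((τ i : Fin N) : ℕ)).eval t ∂α) = P := by
      intro σ
      rw [Finset.sum_eq_single σ]
      · rw [hsq σ, one_mul, hP,
          Equiv.prod_comp σ (fun j : Fin N => ∫ t, (π (j : ℕ)).eval t * (π (j : ℕ)).eval t ∂α)]
      · intro τ _ hτ
        obtain ⟨i, hi⟩ : ∃ i, σ i ≠ τ i := by
          by_contra hc; push_neg at hc; exact hτ (Equiv.ext fun i => (hc i).symm)
        refine mul_eq_zero_of_right _ (Finset.prod_eq_zero (Finset.mem_univ i) ?_)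
        exact horth' _ _ fun hv => hi (Fin.val_injective hv)
      · intro hσ; exact absurd (Finset.mem_univ σ) hσ
    rw [Finset.sum_congr rfl fun σ _ => hrow σ, Finset.sum_const, Finset.card_univ,
      nsmul_eq_mul, hK]
  -- numerator computation
  have hnum_int : ∀ x : Fin N → ℝ, (∏ i, (μ - x i)) * Vand x ^ 2 =
      ∑ σ : Equiv.Perm (Fin (N + 1)), ∑ τ : Equiv.Perm (Fin N),
        (((Equiv.Perm.sign σ : ℤ) : ℝ) * ((Equiv.Perm.sign τ : ℤ) : ℝ) *
            (π ((σ (Fin.last N) : Fin (N + 1)) : ℕ)).eval μ) *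
          ∏ i : Fin N, ((π ((σ (Fin.castSucc i) : Fin (N + 1)) : ℕ)).eval (x i) *
            (π ((τ i : Fin N) : ℕ)).eval (x i)) := by
    intro x
    have h1 : (∏ i, (μ - x i)) * Vand x ^ 2 = Vand (Fin.snoc x μ) * Vand x := by
      rw [vand_snoc, sq]; ring
    rw [h1, key (Fin.snoc x μ), key x, Finset.sum_mul_sum]
    refine Finset.sum_congr rfl fun σ _ => Finset.sum_congr rfl fun τ _ => ?_
    rw [Fin.prod_univ_castSucc]
    simp only [Fin.snoc_castSucc, Fin.snoc_last]
    rw [Finset.prod_mul_distrib]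
    ring
  have hnum : (∫ x : Fin N → ℝ, (∏ i, (μ - x i)) * (Vand x) ^ 2 ∂(Measure.pi fun _ => α))
      = K * ((π N).eval μ * P) := by
    simp only [hnum_int]
    rw [integral_sum_prod α hmom
      (fun (σ : Equiv.Perm (Fin (N + 1))) (τ : Equiv.Perm (Fin N)) =>
        ((Equiv.Perm.sign σ : ℤ) : ℝ) * ((Equiv.Perm.sign τ : ℤ) : ℝ) *
          (π ((σ (Fin.last N) : Fin (N + 1)) : ℕ)).eval μ)
      (fun σ _ i => π ((σ (Fin.castSucc i) : Fin (N + 1)) : ℕ))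
      (fun _ τ i => π ((τ i : Fin N) : ℕ))]
    rw [Finset.sum_comm]
    have hrow : ∀ τ : Equiv.Perm (Fin N),
        (∑ σ : Equiv.Perm (Fin (N + 1)),
          (((Equiv.Perm.sign σ : ℤ) : ℝ) * ((Equiv.Perm.sign τ : ℤ) : ℝ) *
              (π ((σ (Fin.last N) : Fin (N + 1)) : ℕ)).eval μ) *
            ∏ i : Fin N, ∫ t, (π ((σ (Fin.castSucc i) : Fin (N + 1)) : ℕ)).eval t *
              (π ((τ i : Fin N) : ℕ)).eval t ∂α) = (π N).eval μ * P := by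
      intro τ
      rw [Finset.sum_eq_single (extPerm τ)]
      · rw [sign_extPerm, hsq τ, one_mul, extPerm_last]
        have hprod : (∏ i : Fin N, ∫ t,
            (π ((extPerm τ (Fin.castSucc i) : Fin (N + 1)) : ℕ)).eval t *
              (π ((τ i : Fin N) : ℕ)).eval t ∂α) = P := by
          rw [show (fun i : Fin N => ∫ t,
              (π ((extPerm τ (Fin.castSucc i) : Fin (N + 1)) : ℕ)).eval t *
                (π ((τ i : Fin N) : ℕ)).eval t ∂α) =
              fun i : Fin N => ∫ t, (π ((τ i : Fin N) : ℕ)).eval t *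
                (π ((τ i : Fin N) : ℕ)).eval t ∂α from
            funext fun i => by rw [extPerm_castSucc, Fin.coe_castSucc], hP,
            Equiv.prod_comp τ (fun j : Fin N => ∫ t, (π (j : ℕ)).eval t * (π (j : ℕ)).eval t ∂α)]
        rw [hprod, Fin.val_last]
      · intro σ _ hσ
        obtain ⟨i, hi⟩ : ∃ i : Fin N, σ (Fin.castSucc i) ≠ Fin.castSucc (τ i) := by
          by_contra hc; push_neg at hc; exact hσ (eq_extPerm τ σ hc)
        refine mul_eq_zero_of_right _ (Finset.prod_eq_zero (Finset.mem_univ i) ?_)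
        refine horth' _ _ fun hv => hi ?_
        apply Fin.val_injective
        rw [hv, Fin.coe_castSucc]
      · intro hσ; exact absurd (Finset.mem_univ _) hσ
    rw [Finset.sum_congr rfl fun τ _ => hrow τ, Finset.sum_const, Finset.card_univ,
      nsmul_eq_mul, hK]
  rw [hnum, hZval]
  field_simp
end

section
/- Nonvanishing of the Christoffel determinant: if μ₁,…,μ_{ℓ} are distinct real numbers lying strictly above the support of dα, then the ℓ×ℓ determinant det(π_{n+j−1}(μᵢ))₁≤i,j≤ℓ, built from the monic orthogonal polynomials π_n,…,π_{n+ℓ−1}, is nonzero. -/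
open MeasureTheory Polynomial Matrix

lemma aux_ae_mem (α : Measure ℝ) (Q : ℝ) (hQ : α (Set.Icc (-Q) Q)ᶜ = 0) :
    ∀ᵐ t ∂α, t ∈ Set.Icc (-Q) Q := by
  rw [MeasureTheory.ae_iff]
  exact hQ

lemma aux_integrable (α : Measure ℝ) [IsFiniteMeasure α] (Q : ℝ)
    (hQ : α (Set.Icc (-Q) Q)ᶜ = 0) (p : Polynomial ℝ) :
    Integrable (fun t => p.eval t) α := by
  obtain ⟨C0, hC0⟩ := isCompact_Icc.exists_bound_of_continuousOn
    (s := Set.Icc (-Q) Q) p.continuous.continuousOn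
  refine ⟨p.continuous.aestronglyMeasurable, HasFiniteIntegral.of_bounded (C := C0) ?_⟩
  filter_upwards [aux_ae_mem α Q hQ] with t ht
  exact hC0 t ht

lemma aux_integral_add (α : Measure ℝ) [IsFiniteMeasure α] (Q : ℝ)
    (hQ : α (Set.Icc (-Q) Q)ᶜ = 0) (p q : Polynomial ℝ) :
    ∫ t, (p + q).eval t ∂α = (∫ t, p.eval t ∂α) + ∫ t, q.eval t ∂α := by
  simp only [eval_add]
  exact integral_add (aux_integrable α Q hQ p) (aux_integrable α Q hQ q)

lemma aux_integral_Cmul (α : Measure ℝ) [IsFiniteMeasure α] (a : ℝ) (p : Polynomial ℝ) :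
    ∫ t, (Polynomial.C a * p).eval t ∂α = a * ∫ t, p.eval t ∂α := by
  simp only [eval_mul, eval_C]
  exact integral_const_mul a _

/-- `π m` is orthogonal to every polynomial of degree `< m`. -/
lemma aux_orth_lower (α : Measure ℝ) [IsFiniteMeasure α] (Q : ℝ)
    (hQ : α (Set.Icc (-Q) Q)ᶜ = 0) (π : ℕ → Polynomial ℝ)
    (hmonic : ∀ j, (π j).Monic) (hdeg : ∀ j, (π j).natDegree = j)
    (horth : ∀ j k, j ≠ k → ∫ t, (π j).eval t * (π k).eval t ∂α = 0) :
    ∀ (N : ℕ) (q : Polynomial ℝ), q.natDegree ≤ N → ∀ m, q.natDegree < m →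
      ∫ t, (π m * q).eval t ∂α = 0 := by
  intro N
  induction N with
  | zero =>
    intro q hq m hm
    obtain ⟨a, rfl⟩ := Polynomial.natDegree_eq_zero.mp (le_antisymm hq (Nat.zero_le _))
    have hπ0 : π 0 = 1 :=
      Polynomial.Monic.natDegree_eq_zero (hmonic 0) |>.mp (hdeg 0)
    have hCa : Polynomial.C a = Polynomial.C a * π 0 := by rw [hπ0, mul_one]
    rw [hCa, ← mul_assoc, mul_comm (π m) (Polynomial.C a), mul_assoc,
      aux_integral_Cmul α]
    have hm0 : m ≠ 0 := by omega
    have h0 := horth m 0 hm0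
    have : ∫ t, (π m * π 0).eval t ∂α = 0 := by simpa only [eval_mul] using h0
    rw [this, mul_zero]
  | succ N ih =>
    intro q hq m hm
    by_cases hqN : q.natDegree ≤ N
    · exact ih q hqN m hm
    have hd : q.natDegree = N + 1 := by omega
    have hq0 : q ≠ 0 := fun h => by simp [h] at hd
    set d := q.natDegree with hdd
    set r : Polynomial ℝ := q - Polynomial.C q.leadingCoeff * π d with hr
    have hlc : (Polynomial.C q.leadingCoeff : Polynomial ℝ) ≠ 0 := by
      simpa using Polynomial.leadingCoeff_ne_zero.mpr hq0
    have hrdeg : r.natDegree ≤ N := by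
      rcases eq_or_ne r 0 with h | h
      · simp [h]
      · have hlt : r.degree < q.degree := by
          apply Polynomial.degree_sub_lt
          · rw [Polynomial.degree_eq_natDegree hq0,
              Polynomial.degree_eq_natDegree (mul_ne_zero hlc (hmonic d).ne_zero)]
            congr 1
            rw [Polynomial.natDegree_mul hlc (hmonic d).ne_zero]
            simp [hdeg d, Polynomial.natDegree_C]
            exact hdd.symm
          · exact hq0
          · rw [Polynomial.leadingCoeff_mul]
            simp [(hmonic d).leadingCoeff]
        have := Polynomial.natDegree_lt_natDegree h hlt
        omega
    have hqeq : q = Polynomial.C q.leadingCoeff * π d + r := by rw [hr]; ring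
    rw [hqeq, mul_add, aux_integral_add α Q hQ, ← mul_assoc,
      mul_comm (π m) (Polynomial.C q.leadingCoeff), mul_assoc, aux_integral_Cmul α]
    have h1 : ∫ t, (π m * π d).eval t ∂α = 0 := by
      simpa only [eval_mul] using horth m d (by omega)
    have h2 : ∫ t, (π m * r).eval t ∂α = 0 := ih r hrdeg m (by omega)
    rw [h1, h2, mul_zero, add_zero]

/-- Nonvanishing of the Christoffel determinant `det(π_{n+j-1}(μ_i)) ≠ 0` for distinct
points `μ_i` strictly above the (compact) support of the measure. -/
theorem christoffel_determinant_ne_zero (α : Measure ℝ) [IsFiniteMeasure α] (Q : ℝ)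
    (hQ : α (Set.Icc (-Q) Q)ᶜ = 0)
    (hposdef : ∀ p : Polynomial ℝ, p ≠ 0 → 0 < ∫ t, (p.eval t) ^ 2 ∂α)
    (π : ℕ → Polynomial ℝ)
    (hmonic : ∀ j, (π j).Monic) (hdeg : ∀ j, (π j).natDegree = j)
    (horth : ∀ j k, j ≠ k → ∫ t, (π j).eval t * (π k).eval t ∂α = 0)
    (n ℓ : ℕ) (μ : Fin ℓ → ℝ) (hμ : Function.Injective μ) (hμQ : ∀ i, Q < μ i) :
    (Matrix.of fun i j : Fin ℓ => (π (n + j)).eval (μ i)).det ≠ 0 := by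
  by_contra hdet
  obtain ⟨c, hc, hMc⟩ := Matrix.exists_mulVec_eq_zero_iff.mpr hdet
  set P : Polynomial ℝ := ∑ j : Fin ℓ, Polynomial.C (c j) * π (n + j) with hP
  -- P vanishes at every μ i
  have hroot : ∀ i, P.eval (μ i) = 0 := by
    intro i
    have hrow := congrFun hMc i
    simp only [Matrix.mulVec, dotProduct, Matrix.of_apply, Pi.zero_apply] at hrow
    rw [hP]
    simp only [Polynomial.eval_finset_sum, eval_mul, eval_C]
    rw [← hrow]
    exact Finset.sum_congr rfl fun j _ => mul_comm _ _
  -- P ≠ 0 : look at the top nonzero coefficient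
  obtain ⟨j1, hj1⟩ := Function.ne_iff.mp hc
  have hsne : ({j | c j ≠ 0} : Finset (Fin ℓ)).Nonempty := ⟨j1, by simpa using hj1⟩
  set j0 : Fin ℓ := ({j | c j ≠ 0} : Finset (Fin ℓ)).max' hsne with hj0def
  have hcj0 : c j0 ≠ 0 := by
    have := Finset.max'_mem ({j | c j ≠ 0} : Finset (Fin ℓ)) hsne
    simpa using this
  have hj0max : ∀ j : Fin ℓ, c j ≠ 0 → j ≤ j0 := fun j hj =>
    Finset.le_max' _ j (by simpa using hj)
  have hP0 : P ≠ 0 := by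
    intro h
    have hcoeff : P.coeff (n + j0) = c j0 := by
      rw [hP, Polynomial.finset_sum_coeff]
      rw [Finset.sum_eq_single j0]
      · rw [Polynomial.coeff_C_mul]
        have hcf : (π (n + j0)).coeff (n + j0) = 1 := by
          have := (hmonic (n + j0)).coeff_natDegree
          rwa [hdeg (n + j0)] at this
        rw [hcf, mul_one]
      · intro j _ hjne
        rw [Polynomial.coeff_C_mul]
        by_cases hcj : c j = 0
        · rw [hcj, zero_mul]
        · have hle : (j:ℕ) ≤ (j0:ℕ) := hj0max j hcj
          have hne : (j:ℕ) ≠ (j0:ℕ) := fun h' => hjne (Fin.ext h')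
          have hz : (π (n + j)).coeff (n + j0) = 0 := by
            apply Polynomial.coeff_eq_zero_of_natDegree_lt
            rw [hdeg]; omega
          rw [hz, mul_zero]
      · intro h'; exact absurd (Finset.mem_univ j0) h'
    rw [h] at hcoeff
    simp at hcoeff
    exact hcj0 hcoeff.symm
  have hℓ : 1 ≤ ℓ := j1.pos
  -- divisibility by W = ∏ (X - C (μ i))
  set W : Polynomial ℝ := ∏ i : Fin ℓ, (Polynomial.X - Polynomial.C (μ i)) with hW
  have hWdvd : W ∣ P := by
    apply Fintype.prod_dvd_of_coprime (Polynomial.pairwise_coprime_X_sub_C hμ)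
    intro i
    exact Polynomial.dvd_iff_isRoot.mpr (hroot i)
  obtain ⟨R, hPR⟩ := hWdvd
  have hWmonic : W.Monic := monic_prod_of_monic _ _ fun i _ => monic_X_sub_C (μ i)
  have hR0 : R ≠ 0 := fun h => hP0 (by rw [hPR, h, mul_zero])
  have hWdeg : W.natDegree = ℓ := by
    rw [hW, Polynomial.natDegree_prod _ _ fun i _ => Polynomial.X_sub_C_ne_zero (μ i)]
    simp [Polynomial.natDegree_X_sub_C]
  have hPdeg : P.natDegree ≤ n + ℓ - 1 := by
    rw [hP]
    apply Polynomial.natDegree_sum_le_of_forall_le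
    intro j _
    calc (Polynomial.C (c j) * π (n + j)).natDegree ≤ (π (n + j)).natDegree :=
          Polynomial.natDegree_C_mul_le _ _
      _ = n + j := hdeg _
      _ ≤ n + ℓ - 1 := by have := j.isLt; omega
  have hRdeg : R.natDegree < n := by
    have hmul : P.natDegree = W.natDegree + R.natDegree :=
      hPR ▸ Polynomial.natDegree_mul hWmonic.ne_zero hR0
    omega
  -- orthogonality: ∫ P·R = 0
  have hPRint : ∫ t, (P * R).eval t ∂α = 0 := by
    have hsum : P * R = ∑ j : Fin ℓ, Polynomial.C (c j) * (π (n + j) * R) := by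
      rw [hP, Finset.sum_mul]
      exact Finset.sum_congr rfl fun j _ => by ring
    rw [hsum]
    rw [show (fun t => (∑ j : Fin ℓ, Polynomial.C (c j) * (π (n + j) * R)).eval t)
        = fun t => ∑ j : Fin ℓ, (Polynomial.C (c j) * (π (n + j) * R)).eval t from by
      funext t; simp [Polynomial.eval_finset_sum]]
    rw [integral_finset_sum _ fun j _ => aux_integrable α Q hQ _]
    apply Finset.sum_eq_zero
    intro j _
    rw [aux_integral_Cmul α]
    rw [aux_orth_lower α Q hQ π hmonic hdeg horth R.natDegree R le_rfl (n + j) (by omega)]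
    exact mul_zero _
  -- positivity: ∫ V R² > 0 where V = (-1)^ℓ W
  set V : Polynomial ℝ := ∏ i : Fin ℓ, (Polynomial.C (μ i) - Polynomial.X) with hV
  have hVW : V = (-1 : Polynomial ℝ)^ℓ * W := by
    rw [hV, hW, show ((-1 : Polynomial ℝ)^ℓ) = ∏ _i : Fin ℓ, (-1 : Polynomial ℝ) from by simp,
      ← Finset.prod_mul_distrib]
    exact Finset.prod_congr rfl fun i _ => by ring
  set c0 : ℝ := ∏ i : Fin ℓ, (μ i - Q) with hc0
  have hc0pos : 0 < c0 := Finset.prod_pos fun i _ => by have := hμQ i; linarith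
  have hVlb : ∀ t ∈ Set.Icc (-Q) Q, c0 ≤ V.eval t := by
    intro t ht
    rw [hV, hc0]
    simp only [Polynomial.eval_prod, Polynomial.eval_sub, eval_C, eval_X]
    apply Finset.prod_le_prod
    · intro i _; have := hμQ i; linarith
    · intro i _; have := ht.2; linarith
  have hVRpos : 0 < ∫ t, (V * R^2).eval t ∂α := by
    have hmono : ∫ t, c0 * (R.eval t)^2 ∂α ≤ ∫ t, (V * R^2).eval t ∂α := by
      apply integral_mono_ae
      · exact ((aux_integrable α Q hQ (R^2)).const_mul c0).congr
          (by filter_upwards with t; simp [Polynomial.eval_pow])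
      · exact aux_integrable α Q hQ _
      · filter_upwards [aux_ae_mem α Q hQ] with t ht
        simp only [eval_mul, Polynomial.eval_pow]
        have h1 := hVlb t ht
        have h2 : (0:ℝ) ≤ (R.eval t)^2 := sq_nonneg _
        nlinarith
    have hpos : 0 < ∫ t, c0 * (R.eval t)^2 ∂α := by
      rw [integral_const_mul]
      exact mul_pos hc0pos (hposdef R hR0)
    linarith
  -- combine
  have hWR : ∫ t, (W * R^2).eval t ∂α = 0 := by
    have heq : P * R = W * R^2 := by rw [hPR]; ring
    rw [← heq]; exact hPRint
  have hfin : ∫ t, (V * R^2).eval t ∂α = 0 := by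
    rw [hVW, mul_assoc]
    rw [show (fun t => ((-1 : Polynomial ℝ)^ℓ * (W * R^2)).eval t)
        = fun t => (-1:ℝ)^ℓ * (W * R^2).eval t from by funext t; simp]
    rw [integral_const_mul, hWR, mul_zero]
  linarith
end

section
/- Christoffel's formula: the n-th monic orthogonal polynomial π_n^{[ℓ]} for the modified measure ∏_{j=1}^{ℓ}(μ_j − t) dα(t) equals, up to division by (t−μ₁)⋯(t−μ_ℓ), the ratio of the (ℓ+1)×(ℓ+1) determinant with rows (π_n(μᵢ),…,π_{n+ℓ}(μᵢ)) for i=1,…,ℓ and last row (π_n(t),…,π_{n+ℓ}(t)), divided by the ℓ×ℓ determinant det(π_{n+j−1}(μᵢ)). -/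
open MeasureTheory Polynomial Matrix

namespace Christoffel

noncomputable def L (α : Measure ℝ) (p : Polynomial ℝ) : ℝ := ∫ t, p.eval t ∂α

lemma ae_mem_Icc (α : Measure ℝ) (Q : ℝ) (hQ : α (Set.Icc (-Q) Q)ᶜ = 0) :
    ∀ᵐ t ∂α, t ∈ Set.Icc (-Q) Q := by
  rw [MeasureTheory.ae_iff]
  exact hQ

lemma integrable_eval (α : Measure ℝ) [IsFiniteMeasure α] (Q : ℝ)
    (hQ : α (Set.Icc (-Q) Q)ᶜ = 0) (p : Polynomial ℝ) :
    Integrable (fun t => p.eval t) α := by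
  obtain ⟨M, hM⟩ := isCompact_Icc.exists_bound_of_continuousOn
    (f := fun t : ℝ => p.eval t) (p.continuous_aeval).continuousOn
  exact ⟨(p.continuous_aeval).aestronglyMeasurable,
    HasFiniteIntegral.of_bounded (C := M)
      ((ae_mem_Icc α Q hQ).mono fun t htt => hM t htt)⟩

lemma L_add (α : Measure ℝ) [IsFiniteMeasure α] (Q : ℝ)
    (hQ : α (Set.Icc (-Q) Q)ᶜ = 0) (p q : Polynomial ℝ) :
    L α (p + q) = L α p + L α q := by
  simp only [L, eval_add]
  exact integral_add (integrable_eval α Q hQ p) (integrable_eval α Q hQ q)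

lemma L_smul (α : Measure ℝ) (a : ℝ) (p : Polynomial ℝ) :
    L α (a • p) = a * L α p := by
  simp only [L, eval_smul, smul_eq_mul]
  exact integral_const_mul a _

lemma L_sum (α : Measure ℝ) [IsFiniteMeasure α] (Q : ℝ)
    (hQ : α (Set.Icc (-Q) Q)ᶜ = 0) {ι : Type*} (s : Finset ι) (f : ι → Polynomial ℝ) :
    L α (∑ i ∈ s, f i) = ∑ i ∈ s, L α (f i) := by
  classical
  induction s using Finset.induction with
  | empty => simp [L]
  | insert _ _ h ih =>
      rw [Finset.sum_insert h, Finset.sum_insert h, L_add α Q hQ, ih]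

/-- Abstract: a linear functional `T` with orthogonality on a monic graded family
kills `p * π j` whenever `deg p < j`. -/
lemma orth_lo (T : Polynomial ℝ → ℝ)
    (Tadd : ∀ p q, T (p + q) = T p + T q)
    (Tsmul : ∀ (a : ℝ) p, T (a • p) = a * T p)
    (π : ℕ → Polynomial ℝ)
    (hmonic : ∀ j, (π j).Monic) (hdeg : ∀ j, (π j).natDegree = j)
    (hor : ∀ j k, j ≠ k → T (π j * π k) = 0) :
    ∀ (N : ℕ) (p : Polynomial ℝ) (j : ℕ), p.natDegree ≤ N → p.degree < j →
      T (p * π j) = 0 := by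
  have T0 : T 0 = 0 := by
    have := Tsmul 0 0
    simpa using this
  intro N
  induction N with
  | zero =>
    intro p j hN hd
    have hp : p = C (p.coeff 0) := p.eq_C_of_natDegree_le_zero hN
    by_cases ha : p.coeff 0 = 0
    · rw [hp, ha]; simpa using T0
    · have hj : j ≠ 0 := by
        rintro rfl
        rw [hp] at hd
        simp [degree_C ha] at hd
      have hπ0 : π 0 = 1 := (hmonic 0).natDegree_eq_zero.mp (hdeg 0)
      have hrw : p * π j = (p.coeff 0) • (π 0 * π j) := by
        rw [hπ0, one_mul, smul_eq_C_mul, ← hp]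
      rw [hrw, Tsmul, hor 0 j (fun h => hj h.symm), mul_zero]
  | succ N ih =>
    intro p j hN hd
    by_cases hp0 : p = 0
    · rw [hp0, zero_mul]; exact T0
    by_cases hdN : p.natDegree ≤ N
    · exact ih p j hdN hd
    set d := p.natDegree with hd'
    set a := p.leadingCoeff with ha'
    have ha0 : a ≠ 0 := leadingCoeff_ne_zero.mpr hp0
    have hdegCa : (C a * π d).degree = p.degree := by
      rw [degree_mul, degree_C ha0, zero_add,
        degree_eq_natDegree (hmonic d).ne_zero, degree_eq_natDegree hp0, hdeg d]
    have hlcCa : p.leadingCoeff = (C a * π d).leadingCoeff := by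
      rw [leadingCoeff_mul, leadingCoeff_C, (hmonic d).leadingCoeff, mul_one]
    set q := p - C a * π d with hq'
    have hqdeg : q.degree < p.degree := degree_sub_lt hdegCa.symm hp0 hlcCa
    have hqN : q.natDegree ≤ N := by
      by_cases hq0 : q = 0
      · simp [hq0]
      · have := Polynomial.natDegree_lt_natDegree hq0 hqdeg
        omega
    have hqd : q.degree < j := lt_trans hqdeg hd
    have hdj : d ≠ j := by
      have : p.natDegree < j := (natDegree_lt_iff_degree_lt hp0).mpr hd
      omega
    have hsplit : p * π j = q * π j + a • (π d * π j) := by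
      rw [smul_eq_C_mul, hq']
      ring
    rw [hsplit, Tadd, Tsmul, ih q j hqN hqd, hor d j hdj, mul_zero, add_zero]

end Christoffel

/-- Christoffel's formula: the monic orthogonal polynomial for the modified measure
`∏_j (μ_j - t) dα(t)` expressed as a ratio of determinants of the original monic
orthogonal polynomials. -/
theorem christoffel_formula (α : Measure ℝ) [IsFiniteMeasure α] (Q : ℝ)
    (hQ : α (Set.Icc (-Q) Q)ᶜ = 0)
    (hposdef : ∀ p : Polynomial ℝ, p ≠ 0 → 0 < ∫ t, (p.eval t) ^ 2 ∂α)
    (π : ℕ → Polynomial ℝ)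
    (hmonic : ∀ j, (π j).Monic) (hdeg : ∀ j, (π j).natDegree = j)
    (horth : ∀ j k, j ≠ k → ∫ t, (π j).eval t * (π k).eval t ∂α = 0)
    (ℓ : ℕ) (μ : Fin ℓ → ℝ) (hμ : Function.Injective μ) (hμQ : ∀ i, Q < μ i)
    -- the modified measure dα^{[ℓ]}(t) = ∏_j (μ_j - t) dα(t)
    (α' : Measure ℝ)
    (hα' : α' = α.withDensity (fun t => ENNReal.ofReal (∏ j, (μ j - t))))
    -- its monic orthogonal polynomials
    (π' : ℕ → Polynomial ℝ)
    (hmonic' : ∀ j, (π' j).Monic) (hdeg' : ∀ j, (π' j).natDegree = j)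
    (horth' : ∀ j k, j ≠ k → ∫ t, (π' j).eval t * (π' k).eval t ∂α' = 0)
    (n : ℕ) (t : ℝ) (ht : ∀ i, t ≠ μ i) :
    (π' n).eval t =
      (1 / ∏ i, (t - μ i)) *
        ((Matrix.of fun i j : Fin (ℓ + 1) =>
            if h : (i : ℕ) < ℓ then (π (n + j)).eval (μ ⟨i, h⟩)
            else (π (n + j)).eval t).det /
          (Matrix.of fun i j : Fin ℓ => (π (n + j)).eval (μ i)).det) := by
  classical
  have hae := Christoffel.ae_mem_Icc α Q hQ
  have hint := Christoffel.integrable_eval α Q hQ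
  -- the weight polynomial
  set w : Polynomial ℝ := ∏ i, (C (μ i) - X) with hw
  have hwev : ∀ s : ℝ, w.eval s = ∏ i, (μ i - s) := by
    intro s; simp [hw, eval_prod]
  -- conversion of integrals over α' to L α
  have hconv : ∀ p : Polynomial ℝ, ∫ s, p.eval s ∂α' = Christoffel.L α (w * p) := by
    intro p
    rw [hα']
    have hmeas : Measurable fun s : ℝ => Real.toNNReal (∏ j, (μ j - s)) :=
      Measurable.real_toNNReal
        (Finset.measurable_prod _ fun i _ => measurable_const.sub measurable_id)
    have h1 : (fun s : ℝ => ENNReal.ofReal (∏ j, (μ j - s)))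
        = fun s => ((Real.toNNReal (∏ j, (μ j - s)) : NNReal) : ENNReal) := by
      funext s; rfl
    rw [h1, integral_withDensity_eq_integral_smul hmeas]
    show _ = ∫ s, (w * p).eval s ∂α
    apply integral_congr_ae
    filter_upwards [hae] with s hs
    have hwpos : 0 ≤ ∏ j, (μ j - s) := Finset.prod_nonneg fun i _ => by
      have h1 := hμQ i; have h2 := hs.2; linarith
    simp [NNReal.smul_def, Real.coe_toNNReal _ hwpos, eval_mul, hwev]
  -- positivity of the modified functional
  have hposL : ∀ p : Polynomial ℝ, p ≠ 0 → 0 < Christoffel.L α (w * (p * p)) := by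
    intro p hp
    have hc : 0 < ∏ i, (μ i - Q) := Finset.prod_pos fun i _ => sub_pos.mpr (hμQ i)
    have hmono : ∫ s, (∏ i, (μ i - Q)) * (p.eval s) ^ 2 ∂α
        ≤ ∫ s, (w * (p * p)).eval s ∂α := by
      apply integral_mono_ae
      · have := (hint (p * p)).const_mul (∏ i, (μ i - Q))
        simpa [eval_mul, sq] using this
      · exact hint _
      · filter_upwards [hae] with s hs
        have h1 : (∏ i, (μ i - Q)) ≤ ∏ i, (μ i - s) := by
          apply Finset.prod_le_prod
          · intro i _; have := hμQ i; linarith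
          · intro i _; have := hs.2; linarith
        have h2 : (0:ℝ) ≤ (p.eval s) ^ 2 := sq_nonneg _
        calc (∏ i, (μ i - Q)) * (p.eval s) ^ 2
            ≤ (∏ i, (μ i - s)) * (p.eval s) ^ 2 := by
              exact mul_le_mul_of_nonneg_right h1 h2
          _ = (w * (p * p)).eval s := by simp [eval_mul, hwev, sq]; try ring
    have h0 : 0 < (∏ i, (μ i - Q)) * ∫ s, (p.eval s) ^ 2 ∂α :=
      mul_pos hc (hposdef p hp)
    calc (0:ℝ) < (∏ i, (μ i - Q)) * ∫ s, (p.eval s) ^ 2 ∂α := h0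
      _ = ∫ s, (∏ i, (μ i - Q)) * (p.eval s) ^ 2 ∂α := (integral_const_mul _ _).symm
      _ ≤ ∫ s, (w * (p * p)).eval s ∂α := hmono
      _ = Christoffel.L α (w * (p * p)) := rfl
  -- orthogonality facts as L-statements
  have horL : ∀ j k, j ≠ k → Christoffel.L α (π j * π k) = 0 := by
    intro j k hjk
    show ∫ s, (π j * π k).eval s ∂α = 0
    simp only [eval_mul]
    exact horth j k hjk
  have hor' : ∀ j k, j ≠ k → Christoffel.L α (w * (π' j * π' k)) = 0 := by
    intro j k hjk
    rw [← hconv]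
    simp only [eval_mul]
    exact horth' j k hjk
  have horthlo : ∀ (p : Polynomial ℝ) (j : ℕ), p.degree < (j:ℕ) →
      Christoffel.L α (p * π j) = 0 := fun p j h =>
    Christoffel.orth_lo (Christoffel.L α) (Christoffel.L_add α Q hQ)
      (Christoffel.L_smul α) π hmonic hdeg horL p.natDegree p j le_rfl h
  have horthlo' : ∀ (p : Polynomial ℝ) (j : ℕ), p.degree < (j:ℕ) →
      Christoffel.L α (w * (p * π' j)) = 0 := fun p j h =>
    Christoffel.orth_lo (fun f => Christoffel.L α (w * f))
      (fun p q => by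
        show Christoffel.L α (w * (p + q)) = Christoffel.L α (w * p) + Christoffel.L α (w * q)
        rw [mul_add]; exact Christoffel.L_add α Q hQ _ _)
      (fun a p => by
        show Christoffel.L α (w * (a • p)) = a * Christoffel.L α (w * p)
        rw [mul_smul_comm]; exact Christoffel.L_smul α a _)
      π' hmonic' hdeg' hor' p.natDegree p j le_rfl h
  -- matrices
  set A : Matrix (Fin ℓ) (Fin ℓ) ℝ :=
    Matrix.of (fun i j : Fin ℓ => (π (n + j)).eval (μ i)) with hA
  set Δ : ℝ := A.det with hΔdef
  set M : Matrix (Fin (ℓ + 1)) (Fin (ℓ + 1)) (Polynomial ℝ) :=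
    Matrix.of (fun i j : Fin (ℓ + 1) =>
      if h : (i : ℕ) < ℓ then C ((π (n + j)).eval (μ ⟨i, h⟩)) else π (n + j)) with hM
  set D : Polynomial ℝ := M.det with hD
  -- the statement's big determinant is D.eval t
  have hDt : (Matrix.of fun i j : Fin (ℓ + 1) =>
      if h : (i : ℕ) < ℓ then (π (n + j)).eval (μ ⟨i, h⟩)
      else (π (n + j)).eval t).det = D.eval t := by
    have hMM : (Matrix.of fun i j : Fin (ℓ + 1) =>
        if h : (i : ℕ) < ℓ then (π (n + j)).eval (μ ⟨i, h⟩)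
        else (π (n + j)).eval t) = (Polynomial.evalRingHom t).mapMatrix M := by
      ext i j
      by_cases h : (i : ℕ) < ℓ <;> simp [hM, h]
    rw [hMM, ← RingHom.map_det]
    rfl
  -- cofactor expansion along the last row
  set m : Fin (ℓ + 1) → ℝ := fun j =>
    (Matrix.of (fun i i' : Fin ℓ => (π (n + (j.succAbove i' : ℕ))).eval (μ i))).det with hm
  have hexp : D = ∑ j : Fin (ℓ + 1), ((-1 : ℝ) ^ (ℓ + (j : ℕ)) * m j) • π (n + (j : ℕ)) := by
    rw [hD, Matrix.det_succ_row M (Fin.last ℓ)]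
    apply Finset.sum_congr rfl
    intro j _
    have h1 : M (Fin.last ℓ) j = π (n + (j : ℕ)) := by
      simp [hM]
    have h2 : M.submatrix (Fin.last ℓ).succAbove j.succAbove
        = (C : ℝ →+* Polynomial ℝ).mapMatrix
            (Matrix.of (fun i i' : Fin ℓ => (π (n + (j.succAbove i' : ℕ))).eval (μ i))) := by
      ext i i'
      simp [hM, Fin.succAbove_last, Matrix.submatrix, i.isLt]
    rw [h1, h2, ← RingHom.map_det]
    simp [smul_eq_C_mul, Fin.val_last]
    ring
  have hmlast : m (Fin.last ℓ) = Δ := by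
    have he : (Matrix.of (fun i i' : Fin ℓ =>
        (π (n + ((Fin.last ℓ).succAbove i' : ℕ))).eval (μ i))) = A := by
      ext i i'
      simp [hA, Fin.succAbove_last]
    simp only [hm]
    rw [he, hΔdef]
  -- roots of D at the μ i
  have hroot : ∀ i : Fin ℓ, D.eval (μ i) = 0 := by
    intro i
    have : D.eval (μ i) = ((Polynomial.evalRingHom (μ i)).mapMatrix M).det := by
      rw [hD, ← RingHom.map_det]; rfl
    rw [this]
    apply Matrix.det_zero_of_row_eq (i := Fin.castSucc i) (j := Fin.last ℓ)
    · exact (Fin.castSucc_lt_last i).ne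
    · funext j
      simp [hM, i.isLt]
  -- divisibility by the product of linear factors
  set P : Polynomial ℝ := ∏ i, (X - C (μ i)) with hP
  have hPmonic : P.Monic := monic_prod_of_monic _ _ fun i _ => monic_X_sub_C _
  have hdvd : ∀ p : Polynomial ℝ, (∀ i, p.eval (μ i) = 0) → P ∣ p := by
    intro p hp
    apply Finset.prod_dvd_of_coprime
    · intro i _ j _ hij
      exact isCoprime_X_sub_C_of_isUnit_sub
        (isUnit_iff_ne_zero.mpr (sub_ne_zero.mpr fun h => hij (hμ h)))
    · intro i _
      exact dvd_iff_isRoot.mpr (hp i)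
  have hwP : w = (-1 : Polynomial ℝ) ^ ℓ * P := by
    calc w = ∏ i, ((-1 : Polynomial ℝ) * (X - C (μ i))) := by
          apply Finset.prod_congr rfl; intro i _; ring
      _ = (-1 : Polynomial ℝ) ^ ℓ * P := by
          rw [Finset.prod_mul_distrib, Finset.prod_const, Finset.card_univ,
            Fintype.card_fin, hP]
  have hnatP : P.natDegree = ℓ := by
    rw [hP, natDegree_prod _ _ fun i _ => X_sub_C_ne_zero _]
    simp
  -- the key nonvanishing of Δ
  have hΔ0 : Δ ≠ 0 := by
    intro h0
    obtain ⟨c, hc0, hc⟩ := Matrix.exists_mulVec_eq_zero_iff.mpr h0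
    rcases Nat.eq_zero_or_pos ℓ with hl0 | hlpos
    · subst hl0; exact hc0 (funext fun i => i.elim0)
    set p : Polynomial ℝ := ∑ j : Fin ℓ, c j • π (n + (j : ℕ)) with hpdef
    have hex : (Finset.univ.filter fun j : Fin ℓ => c j ≠ 0).Nonempty := by
      by_contra h
      rw [Finset.not_nonempty_iff_eq_empty, Finset.filter_eq_empty_iff] at h
      exact hc0 (funext fun j => by simpa using h (Finset.mem_univ j))
    set jm := (Finset.univ.filter fun j : Fin ℓ => c j ≠ 0).max' hex with hjm
    have hjmne : c jm ≠ 0 := by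
      have := (Finset.univ.filter fun j : Fin ℓ => c j ≠ 0).max'_mem hex
      simpa using this
    have hpcoeff : p.coeff (n + (jm : ℕ)) = c jm := by
      rw [hpdef, finset_sum_coeff]
      rw [Finset.sum_eq_single jm]
      · have h1 : (π (n + (jm : ℕ))).coeff (n + (jm : ℕ)) = 1 := by
          have := (hmonic (n + (jm : ℕ))).coeff_natDegree
          rwa [hdeg] at this
        rw [coeff_smul, h1, smul_eq_mul, mul_one]
      · intro j _ hj
        by_cases hcj : c j = 0
        · simp [hcj]
        · have hjS : j ∈ Finset.univ.filter fun j : Fin ℓ => c j ≠ 0 := by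
            simp [hcj]
          have hle : j ≤ jm := Finset.le_max' _ j hjS
          have hlt : (j : ℕ) < (jm : ℕ) :=
            lt_of_le_of_ne hle fun h => hj (Fin.ext h)
          rw [coeff_smul, coeff_eq_zero_of_natDegree_lt (by rw [hdeg]; omega),
            smul_zero]
      · intro h; exact absurd (Finset.mem_univ jm) h
    have hp0 : p ≠ 0 := by
      intro h
      rw [h, coeff_zero] at hpcoeff
      exact hjmne hpcoeff.symm
    have hproots : ∀ i, p.eval (μ i) = 0 := by
      intro i
      have hci := congrFun hc i
      have : (A *ᵥ c) i = ∑ j, A i j * c j := rfl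
      rw [this] at hci
      calc p.eval (μ i) = ∑ j, c j * (π (n + (j : ℕ))).eval (μ i) := by
            rw [hpdef, eval_finset_sum]
            apply Finset.sum_congr rfl
            intro j _
            rw [eval_smul, smul_eq_mul]
        _ = ∑ j, A i j * c j := by
            apply Finset.sum_congr rfl
            intro j _
            rw [mul_comm]
            rfl
        _ = 0 := hci
    obtain ⟨r, hr⟩ := hdvd p hproots
    have hr0 : r ≠ 0 := fun h => hp0 (by rw [hr, h, mul_zero])
    have hpdegle : p.natDegree ≤ n + ℓ - 1 := by
      apply Polynomial.natDegree_sum_le_of_forall_le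
      intro j _
      refine le_trans (natDegree_smul_le _ _) ?_
      rw [hdeg]
      have := j.isLt
      omega
    have hnatp : p.natDegree = ℓ + r.natDegree := by
      rw [hr, natDegree_mul hPmonic.ne_zero hr0, hnatP]
    have hrd : r.natDegree < n := by omega
    have hrdeg : r.degree < (n : ℕ) :=
      lt_of_le_of_lt degree_le_natDegree (by exact_mod_cast hrd)
    have h1 : Christoffel.L α (p * r) = 0 := by
      have hsum : p * r = ∑ j : Fin ℓ, c j • (r * π (n + (j : ℕ))) := by
        rw [hpdef, Finset.sum_mul]
        apply Finset.sum_congr rfl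
        intro j _
        rw [smul_mul_assoc, mul_comm]
      rw [hsum, Christoffel.L_sum α Q hQ]
      apply Finset.sum_eq_zero
      intro j _
      rw [Christoffel.L_smul, horthlo r _ (lt_of_lt_of_le hrdeg (by
        exact_mod_cast Nat.le_add_right n (j : ℕ))), mul_zero]
    have h2 : p * r = ((-1 : ℝ) ^ ℓ) • (w * (r * r)) := by
      have hone : ((-1 : Polynomial ℝ) ^ ℓ * (-1 : Polynomial ℝ) ^ ℓ) = 1 := by
        rw [← mul_pow]; norm_num
      calc p * r = P * (r * r) := by rw [hr]; ring
        _ = ((-1 : Polynomial ℝ) ^ ℓ * (-1 : Polynomial ℝ) ^ ℓ) * (P * (r * r)) := by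
            rw [hone, one_mul]
        _ = ((-1 : ℝ) ^ ℓ) • (w * (r * r)) := by
            rw [hwP, smul_eq_C_mul]
            simp only [map_pow, map_neg, _root_.map_one]
            ring
    have h3 : (0:ℝ) = (-1 : ℝ) ^ ℓ * Christoffel.L α (w * (r * r)) := by
      rw [← Christoffel.L_smul, ← h2, h1]
    have hne : ((-1 : ℝ) ^ ℓ) ≠ 0 := pow_ne_zero _ (by norm_num)
    have : Christoffel.L α (w * (r * r)) = 0 :=
      (mul_eq_zero.mp h3.symm).resolve_left hne
    linarith [hposL r hr0]
  -- leading coefficient of D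
  have hcoeffD : D.coeff (n + ℓ) = Δ := by
    rw [hexp, finset_sum_coeff, Finset.sum_eq_single (Fin.last ℓ)]
    · have h1 : (π (n + ℓ)).coeff (n + ℓ) = 1 := by
        have := (hmonic (n + ℓ)).coeff_natDegree
        rwa [hdeg] at this
      have h2 : ((-1 : ℝ) ^ (ℓ + ℓ)) = 1 := Even.neg_one_pow ⟨ℓ, rfl⟩
      simp [coeff_smul, h1, hmlast, h2]
    · intro j _ hj
      have hjl : (j : ℕ) < ℓ := Fin.val_lt_last hj
      rw [coeff_smul, coeff_eq_zero_of_natDegree_lt (by rw [hdeg]; omega), smul_zero]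
    · intro h; exact absurd (Finset.mem_univ _) h
  have hdegD : D.degree ≤ ((n + ℓ : ℕ) : WithBot ℕ) := by
    rw [hexp]
    refine le_trans (degree_sum_le _ _) (Finset.sup_le fun j _ => ?_)
    refine le_trans (degree_smul_le _ _) ?_
    refine le_trans degree_le_natDegree ?_
    rw [hdeg]
    exact_mod_cast (by omega : n + (j : ℕ) ≤ n + ℓ)
  have hD0 : D ≠ 0 := fun h => hΔ0 (by rw [← hcoeffD, h, coeff_zero])
  have hnatD : D.natDegree = n + ℓ :=
    le_antisymm (natDegree_le_iff_degree_le.mpr hdegD)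
      (le_natDegree_of_ne_zero (hcoeffD ▸ hΔ0))
  have hlcD : D.leadingCoeff = Δ := by
    rw [Polynomial.leadingCoeff, hnatD, hcoeffD]
  -- divide out the linear factors
  obtain ⟨qq, hqq⟩ := hdvd D hroot
  have hqq0 : qq ≠ 0 := fun h => hD0 (by rw [hqq, h, mul_zero])
  have hnatqq : qq.natDegree = n := by
    have h := natDegree_mul hPmonic.ne_zero hqq0
    rw [← hqq, hnatD, hnatP] at h
    omega
  have hlcqq : qq.leadingCoeff = Δ := by
    have h := leadingCoeff_mul P qq
    rw [← hqq, hPmonic.leadingCoeff, one_mul] at h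
    rw [← h, hlcD]
  -- orthogonality of qq for the modified functional
  have hqorth : ∀ s : Polynomial ℝ, s.degree < (n : ℕ) →
      Christoffel.L α (w * (s * qq)) = 0 := by
    intro s hs
    have hsD : Christoffel.L α (s * D) = 0 := by
      have hsum : s * D = ∑ j : Fin (ℓ + 1),
          ((-1 : ℝ) ^ (ℓ + (j : ℕ)) * m j) • (s * π (n + (j : ℕ))) := by
        rw [hexp, Finset.mul_sum]
        apply Finset.sum_congr rfl
        intro j _
        rw [mul_smul_comm]
      rw [hsum, Christoffel.L_sum α Q hQ]
      apply Finset.sum_eq_zero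
      intro j _
      rw [Christoffel.L_smul, horthlo s _ (lt_of_lt_of_le hs (by
        exact_mod_cast Nat.le_add_right n (j : ℕ))), mul_zero]
    have hrw : w * (s * qq) = ((-1 : ℝ) ^ ℓ) • (s * D) := by
      rw [hqq, hwP, smul_eq_C_mul]
      simp only [map_pow, map_neg, _root_.map_one]
      ring
    rw [hrw, Christoffel.L_smul, hsD, mul_zero]
  -- uniqueness: π' n = Δ⁻¹ • qq
  have hnatsq : (Δ⁻¹ • qq).natDegree = n := by
    rw [smul_eq_C_mul, natDegree_mul (by
      simpa using inv_ne_zero hΔ0) hqq0, natDegree_C, zero_add, hnatqq]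
  have hlcsq : (Δ⁻¹ • qq).leadingCoeff = 1 := by
    rw [smul_eq_C_mul, leadingCoeff_mul, leadingCoeff_C, hlcqq,
      inv_mul_cancel₀ hΔ0]
  have hsq0 : (Δ⁻¹ • qq) ≠ 0 := by
    intro h
    rw [h, leadingCoeff_zero] at hlcsq
    exact one_ne_zero hlcsq.symm
  set dd : Polynomial ℝ := π' n - Δ⁻¹ • qq with hdd
  have hdddeg : dd.degree < (n : ℕ) := by
    by_cases hdd0 : dd = 0
    · rw [hdd0, degree_zero]; exact WithBot.bot_lt_coe n
    · have h1 : (π' n).degree = (Δ⁻¹ • qq).degree := by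
        rw [degree_eq_natDegree (hmonic' n).ne_zero, degree_eq_natDegree hsq0,
          hdeg' n, hnatsq]
      have h2 := degree_sub_lt h1 (hmonic' n).ne_zero (by
        rw [(hmonic' n).leadingCoeff, hlcsq])
      rw [← hdd] at h2
      calc dd.degree < (π' n).degree := h2
        _ ≤ (n : ℕ) := by
          rw [degree_eq_natDegree (hmonic' n).ne_zero, hdeg' n]
  have e1 : Christoffel.L α (w * (dd * π' n)) = 0 := horthlo' dd n hdddeg
  have e2 : Christoffel.L α (w * (dd * qq)) = 0 := hqorth dd hdddeg
  have e3 : Christoffel.L α (w * (dd * dd)) = 0 := by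
    have hsplit : w * (dd * dd) = w * (dd * π' n) + (-Δ⁻¹) • (w * (dd * qq)) := by
      simp only [hdd, smul_eq_C_mul, map_neg]
      ring
    rw [hsplit, Christoffel.L_add α Q hQ, Christoffel.L_smul, e1, e2, mul_zero,
      add_zero]
  have hddz : dd = 0 := by
    by_contra hne
    exact absurd e3 (ne_of_gt (hposL dd hne))
  have hkey : π' n = Δ⁻¹ • qq := by
    have := sub_eq_zero.mp (hdd ▸ hddz)
    exact this
  -- final evaluation
  have hPt : P.eval t = ∏ i, (t - μ i) := by simp [hP, eval_prod]
  have hPt0 : (∏ i, (t - μ i)) ≠ 0 :=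
    Finset.prod_ne_zero_iff.mpr fun i _ => sub_ne_zero.mpr (ht i)
  have hDteval : D.eval t = (∏ i, (t - μ i)) * qq.eval t := by
    rw [hqq, eval_mul, hPt]
  rw [hDt, hkey, hDteval]
  rw [eval_smul, smul_eq_mul]
  field_simp
end

section
/- Telescoping of partition functions: the average of ∏_{j=1}^{L} ∏_{i=1}^{N}(μ_j − xᵢ) with respect to the weight Δ(x)²dα(x)/Z_N equals the product ∏_{j=0}^{L−1} π_N^{[j]}(μ_{j+1}), where π_N^{[j]} is the N-th monic orthogonal polynomial with respect to the measure ∏_{k=1}^{j}(μ_k − t) dα(t). -/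
open MeasureTheory Polynomial Finset

namespace TelAux

open Matrix Equiv

lemma integral_pi_prod {N : ℕ} (β : Measure ℝ) [IsFiniteMeasure β] (f : Fin N → ℝ → ℝ) :
    ∫ x : Fin N → ℝ, ∏ i, f i (x i) ∂(Measure.pi fun _ => β) = ∏ i, ∫ t, f i t ∂β := by
  letI : MeasureSpace ℝ := ⟨β⟩
  exact MeasureTheory.integral_fintype_prod_eq_prod (ι := Fin N) f

lemma integrable_pi_prod {N : ℕ} (β : Measure ℝ) [IsFiniteMeasure β] (f : Fin N → ℝ → ℝ)
    (hf : ∀ i, Integrable (f i) β) :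
    Integrable (fun x : Fin N → ℝ => ∏ i, f i (x i)) (Measure.pi fun _ => β) := by
  letI : MeasureSpace ℝ := ⟨β⟩
  exact MeasureTheory.Integrable.fintype_prod hf

lemma ae_mem_Icc {Q : ℝ} (β : Measure ℝ) (hQ : β (Set.Icc (-Q) Q)ᶜ = 0) :
    ∀ᵐ t ∂β, t ∈ Set.Icc (-Q) Q := by
  rw [ae_iff]
  refine measure_mono_null (fun t ht => ?_) hQ
  simpa using ht

lemma integrable_poly {Q : ℝ} (β : Measure ℝ) [IsFiniteMeasure β]
    (hQ : β (Set.Icc (-Q) Q)ᶜ = 0) (p : ℝ[X]) :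
    Integrable (fun t => p.eval t) β := by
  obtain ⟨C, hC⟩ : ∃ C, ∀ t ∈ Set.Icc (-Q) Q, ‖p.eval t‖ ≤ C :=
    isCompact_Icc.exists_bound_of_continuousOn (p.continuous).continuousOn
  refine ⟨(p.continuous).aestronglyMeasurable, HasFiniteIntegral.of_bounded (C := C) ?_⟩
  filter_upwards [ae_mem_Icc β hQ] with t ht using hC t ht

/-- sign as a real number -/
noncomputable def sgn {N : ℕ} (σ : Perm (Fin N)) : ℝ := ((Perm.sign σ : ℤ) : ℝ)

lemma det_mul_det_eq_sum {N : ℕ} (f g : Fin N → ℝ[X]) (x : Fin N → ℝ) :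
    (Matrix.det (Matrix.of fun i k => (f k).eval (x i))) *
      (Matrix.det (Matrix.of fun i k => (g k).eval (x i)))
    = ∑ σ : Perm (Fin N), ∑ τ : Perm (Fin N),
        (sgn σ * sgn τ) * ∏ i, (f (σ⁻¹ i) * g (τ⁻¹ i)).eval (x i) := by
  classical
  have hdet : ∀ (h : Fin N → ℝ[X]),
      Matrix.det (Matrix.of fun i k => (h k).eval (x i))
        = ∑ σ : Perm (Fin N), sgn σ * ∏ i, (h (σ⁻¹ i)).eval (x i) := by
    intro h
    rw [Matrix.det_apply']
    refine Finset.sum_congr rfl fun σ _ => ?_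
    congr 1
    rw [← Equiv.prod_comp σ fun j => (h (σ⁻¹ j)).eval (x j)]
    simp
  rw [hdet f, hdet g, Finset.sum_mul_sum]
  refine Finset.sum_congr rfl fun σ _ => Finset.sum_congr rfl fun τ _ => ?_
  simp only [eval_mul, Finset.prod_mul_distrib]
  ring

lemma integrable_det_det {N : ℕ} {Q : ℝ} (β : Measure ℝ) [IsFiniteMeasure β]
    (hQ : β (Set.Icc (-Q) Q)ᶜ = 0) (f g : Fin N → ℝ[X]) :
    Integrable (fun x : Fin N → ℝ =>
      (Matrix.det (Matrix.of fun i k => (f k).eval (x i))) *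
        (Matrix.det (Matrix.of fun i k => (g k).eval (x i))))
      (Measure.pi fun _ => β) := by
  classical
  rw [show (fun x : Fin N → ℝ =>
      (Matrix.det (Matrix.of fun i k => (f k).eval (x i))) *
        (Matrix.det (Matrix.of fun i k => (g k).eval (x i))))
      = fun x => ∑ σ : Perm (Fin N), ∑ τ : Perm (Fin N),
          (sgn σ * sgn τ) * ∏ i, (f (σ⁻¹ i) * g (τ⁻¹ i)).eval (x i)
      from funext (det_mul_det_eq_sum f g)]
  exact integrable_finset_sum _ (fun σ _ => integrable_finset_sum _ (fun τ _ =>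
    (integrable_pi_prod β _ (fun i => integrable_poly β hQ _)).const_mul _))

lemma andreief {N : ℕ} {Q : ℝ} (β : Measure ℝ) [IsFiniteMeasure β]
    (hQ : β (Set.Icc (-Q) Q)ᶜ = 0) (f g : Fin N → ℝ[X]) :
    ∫ x : Fin N → ℝ, (Matrix.det (Matrix.of fun i k => (f k).eval (x i))) *
      (Matrix.det (Matrix.of fun i k => (g k).eval (x i))) ∂(Measure.pi fun _ => β)
    = (N.factorial : ℝ) *
      Matrix.det (Matrix.of fun j k => ∫ t, (f j).eval t * (g k).eval t ∂β) := by
  classical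
  have hcmul : ∀ a b : Perm (Fin N), sgn (a * b) = sgn a * sgn b := by
    intro a b; simp [sgn, _root_.map_mul]
  have hcinv : ∀ a : Perm (Fin N), sgn a⁻¹ = sgn a := by
    intro a; simp [sgn]
  have int1 : ∀ σ τ : Perm (Fin N),
      Integrable (fun x : Fin N → ℝ =>
        (sgn σ * sgn τ) * ∏ i, (f (σ⁻¹ i) * g (τ⁻¹ i)).eval (x i))
        (Measure.pi fun _ => β) := fun σ τ =>
    (integrable_pi_prod β _ (fun i => integrable_poly β hQ _)).const_mul _
  rw [show (fun x : Fin N → ℝ => (Matrix.det (Matrix.of fun i k => (f k).eval (x i))) *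
      (Matrix.det (Matrix.of fun i k => (g k).eval (x i))))
      = fun x => ∑ σ : Perm (Fin N), ∑ τ : Perm (Fin N),
          (sgn σ * sgn τ) * ∏ i, (f (σ⁻¹ i) * g (τ⁻¹ i)).eval (x i)
      from funext (det_mul_det_eq_sum f g)]
  rw [integral_finset_sum _ (fun σ _ => integrable_finset_sum _ (fun τ _ => int1 σ τ))]
  have swap2 : ∀ σ : Perm (Fin N),
      ∫ x : Fin N → ℝ, ∑ τ : Perm (Fin N),
          (sgn σ * sgn τ) * ∏ i, (f (σ⁻¹ i) * g (τ⁻¹ i)).eval (x i) ∂(Measure.pi fun _ => β)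
      = ∑ τ : Perm (Fin N), (sgn σ * sgn τ) *
          ∏ i, ∫ t, (f (σ⁻¹ i)).eval t * (g (τ⁻¹ i)).eval t ∂β := by
    intro σ
    rw [integral_finset_sum _ (fun τ _ => int1 σ τ)]
    refine Finset.sum_congr rfl fun τ _ => ?_
    rw [integral_const_mul,
      integral_pi_prod β (fun i t => (f (σ⁻¹ i) * g (τ⁻¹ i)).eval t)]
    simp [eval_mul]
  simp_rw [swap2]
  set M : Matrix (Fin N) (Fin N) ℝ :=
    Matrix.of fun j k => ∫ t, (f j).eval t * (g k).eval t ∂β with hMdef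
  have hM : ∀ σ τ : Perm (Fin N),
      ∏ i, ∫ t, (f (σ⁻¹ i)).eval t * (g (τ⁻¹ i)).eval t ∂β
        = ∏ j, M j ((τ⁻¹ * σ) j) := by
    intro σ τ
    rw [← Equiv.prod_comp σ fun i => ∫ t, (f (σ⁻¹ i)).eval t * (g (τ⁻¹ i)).eval t ∂β]
    refine Finset.prod_congr rfl fun j _ => ?_
    simp [hMdef, Perm.mul_apply]
  simp_rw [hM]
  have reindex : ∀ σ : Perm (Fin N),
      ∑ τ : Perm (Fin N), sgn σ * sgn τ * ∏ j, M j ((τ⁻¹ * σ) j)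
      = ∑ ρ : Perm (Fin N), sgn ρ * ∏ j, M j (ρ j) := by
    intro σ
    rw [← Equiv.sum_comp ((Equiv.inv (Perm (Fin N))).trans (Equiv.mulRight σ))
      (fun ρ => sgn ρ * ∏ j, M j (ρ j))]
    refine Finset.sum_congr rfl fun τ _ => ?_
    have h1 : ((Equiv.inv (Perm (Fin N))).trans (Equiv.mulRight σ)) τ = τ⁻¹ * σ := rfl
    rw [h1, hcmul, hcinv]
    ring
  simp_rw [reindex, Finset.sum_const, Finset.card_univ, Fintype.card_perm, Fintype.card_fin,
    nsmul_eq_mul]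
  congr 1
  rw [← Matrix.det_transpose M, Matrix.det_apply']
  refine Finset.sum_congr rfl fun ρ _ => ?_
  simp [sgn, Matrix.transpose_apply]

lemma vand_eq {n : ℕ} (x : Fin n → ℝ) :
    Vand x = ∏ i : Fin n, ∏ j ∈ Finset.Ioi i, (x j - x i) := by
  rw [Vand, Finset.prod_comm' (t' := Finset.univ) (s' := fun j => Finset.Ioi j)]
  intro i j
  simp

lemma vand_eq_det {n : ℕ} (x : Fin n → ℝ) (p : Fin n → ℝ[X])
    (hdeg : ∀ i : Fin n, (p i).natDegree = i) (hmonic : ∀ i, (p i).Monic) :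
    Vand x = Matrix.det (Matrix.of fun i k => (p k).eval (x i)) := by
  rw [← Matrix.det_eval_matrixOfPolynomials_eq_det_vandermonde x p hdeg hmonic,
    Matrix.det_vandermonde, vand_eq]

lemma vand_eq_ite {n : ℕ} (x : Fin n → ℝ) :
    Vand x = ∏ i : Fin n, ∏ j : Fin n, if i < j then (x j - x i) else 1 := by
  rw [vand_eq]
  refine Finset.prod_congr rfl fun i _ => ?_
  rw [← Finset.filter_lt_eq_Ioi, Finset.prod_filter]

lemma vand_snoc {n : ℕ} (x : Fin n → ℝ) (μ : ℝ) :
    Vand (Fin.snoc x μ) = (∏ i, (μ - x i)) * Vand x := by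
  simp only [vand_eq_ite]
  rw [Fin.prod_univ_castSucc]
  simp only [Fin.prod_univ_castSucc (n := n)]
  simp only [Fin.snoc_castSucc, Fin.snoc_last, Fin.castSucc_lt_castSucc_iff,
    Fin.castSucc_lt_last, if_true, Fin.lt_irrefl, if_false]
  have hlast : ∀ j : Fin n, ¬ (Fin.last n < Fin.castSucc j) := by
    intro j; exact not_lt.2 (Fin.castSucc_lt_last j).le
  simp only [hlast, if_false, Finset.prod_const_one, mul_one, Fin.lt_irrefl]
  rw [Finset.prod_mul_distrib]
  ring

end TelAux

namespace TelAux
open Matrix Equiv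

lemma step {N : ℕ} {Q : ℝ} (β : Measure ℝ) [IsFiniteMeasure β]
    (hQ : β (Set.Icc (-Q) Q)ᶜ = 0) (v : ℝ[X]) (π : ℕ → ℝ[X])
    (hmonic : ∀ k, (π k).Monic) (hdeg : ∀ k, (π k).natDegree = k)
    (ho : ∀ k l : ℕ, k ≠ l → ∫ t, (π k).eval t * (π l).eval t * v.eval t ∂β = 0)
    (μ0 : ℝ) :
    ∫ x : Fin N → ℝ, ((∏ i, (μ0 - x i)) * ∏ i, v.eval (x i)) * Vand x ^ 2
        ∂(Measure.pi fun _ => β)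
    = (π N).eval μ0 *
        ∫ x : Fin N → ℝ, (∏ i, v.eval (x i)) * Vand x ^ 2 ∂(Measure.pi fun _ => β) := by
  classical
  set gfam : Fin N → ℝ[X] := fun k => v * π (k : ℕ) with hgfam
  set pfam : Fin N → ℝ[X] := fun k => π (k : ℕ) with hpfam
  set d : Fin N → ℝ := fun j => ∫ t, (pfam j).eval t * (gfam j).eval t ∂β with hd
  have hpdeg : ∀ k : Fin N, (pfam k).natDegree = (k : ℕ) := fun k => hdeg _
  have hpmon : ∀ k : Fin N, (pfam k).Monic := fun k => hmonic _
  -- entries rewriting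
  have entry : ∀ a : ℕ, ∀ l : Fin N,
      (∫ t, (π a).eval t * (gfam l).eval t ∂β)
        = ∫ t, (π a).eval t * (π (l : ℕ)).eval t * v.eval t ∂β := by
    intro a l
    congr 1
    funext t
    simp only [hgfam, eval_mul]
    ring
  -- the RHS matrix is diagonal
  have hdiagM : (Matrix.of fun j k : Fin N => ∫ t, (pfam j).eval t * (gfam k).eval t ∂β)
      = Matrix.diagonal d := by
    ext j k
    by_cases h : j = k
    · subst h; simp [Matrix.diagonal, hd]
    · have : (j : ℕ) ≠ (k : ℕ) := fun hh => h (Fin.ext hh)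
      simp only [Matrix.of_apply, Matrix.diagonal, Matrix.of_apply]
      rw [if_neg h]
      rw [hpfam]
      simp only
      rw [entry ((j : ℕ)) k]
      exact ho _ _ this
  have hRHS : (∫ x : Fin N → ℝ, (∏ i, v.eval (x i)) * Vand x ^ 2 ∂(Measure.pi fun _ => β))
      = (N.factorial : ℝ) * ∏ j, d j := by
    have hint : (fun x : Fin N → ℝ => (∏ i, v.eval (x i)) * Vand x ^ 2)
        = fun x => (Matrix.det (Matrix.of fun i k => (pfam k).eval (x i))) *
            (Matrix.det (Matrix.of fun i k => (gfam k).eval (x i))) := by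
      funext x
      have h1 : Matrix.det (Matrix.of fun i k => (pfam k).eval (x i)) = Vand x :=
        (vand_eq_det x pfam hpdeg hpmon).symm
      have h2 : Matrix.det (Matrix.of fun i k => (gfam k).eval (x i))
          = (∏ i, v.eval (x i)) * Vand x := by
        have he : (Matrix.of fun i k => (gfam k).eval (x i))
            = Matrix.of fun i k => v.eval (x i) * (pfam k).eval (x i) := by
          ext i k; simp [hgfam, hpfam, eval_mul]
        rw [he, ← h1]; exact Matrix.det_mul_column (fun i => v.eval (x i)) (Matrix.of fun i k => (pfam k).eval (x i))
        try exact rfl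
      rw [h1, h2]; ring
    rw [hint, andreief β hQ pfam gfam, hdiagM, Matrix.det_diagonal]
  -- LHS expansion
  set A : (Fin N → ℝ) → Matrix (Fin (N + 1)) (Fin (N + 1)) ℝ :=
    fun x => Matrix.of fun i k => (π (k : ℕ)).eval ((Fin.snoc x μ0 : Fin (N + 1) → ℝ) i) with hA
  set B : Fin (N + 1) → (Fin N → ℝ) → Matrix (Fin N) (Fin N) ℝ :=
    fun k x => Matrix.of fun i j => (π ((k.succAbove j : Fin (N + 1)) : ℕ)).eval (x i) with hB
  have hAdet : ∀ x : Fin N → ℝ,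
      Matrix.det (A x) = (∏ i, (μ0 - x i)) * Vand x := by
    intro x
    rw [← vand_snoc]
    exact (vand_eq_det (Fin.snoc x μ0) (fun k => π (k : ℕ)) (fun k => hdeg _)
      (fun k => hmonic _)).symm
  have hexpand : ∀ x : Fin N → ℝ,
      Matrix.det (A x) = ∑ k : Fin (N + 1),
        ((-1 : ℝ) ^ (N + (k : ℕ)) * (π (k : ℕ)).eval μ0) * Matrix.det (B k x) := by
    intro x
    rw [Matrix.det_succ_row (A x) (Fin.last N)]
    refine Finset.sum_congr rfl fun k _ => ?_
    have h1 : A x (Fin.last N) k = (π (k : ℕ)).eval μ0 := by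
      simp [hA, Fin.snoc_last]
    have h2 : (A x).submatrix (Fin.last N).succAbove k.succAbove = B k x := by
      ext i j
      simp [hA, hB, Matrix.submatrix_apply, Fin.succAbove_last, Fin.snoc_castSucc]
    rw [h1, h2]
    simp only [Fin.val_last]
    try ring
  have hLHSfun : (fun x : Fin N → ℝ => ((∏ i, (μ0 - x i)) * ∏ i, v.eval (x i)) * Vand x ^ 2)
      = fun x => ∑ k : Fin (N + 1),
          ((-1 : ℝ) ^ (N + (k : ℕ)) * (π (k : ℕ)).eval μ0) *
            ((Matrix.det (B k x)) *
              (Matrix.det (Matrix.of fun i k' => (gfam k').eval (x i)))) := by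
    funext x
    have h2 : Matrix.det (Matrix.of fun i k => (gfam k).eval (x i))
        = (∏ i, v.eval (x i)) * Vand x := by
      have h1 : Matrix.det (Matrix.of fun i k => (pfam k).eval (x i)) = Vand x :=
        (vand_eq_det x pfam hpdeg hpmon).symm
      have he : (Matrix.of fun i k => (gfam k).eval (x i))
          = Matrix.of fun i k => v.eval (x i) * (pfam k).eval (x i) := by
        ext i k; simp [hgfam, hpfam, eval_mul]
      rw [he, ← h1]; exact Matrix.det_mul_column (fun i => v.eval (x i)) (Matrix.of fun i k => (pfam k).eval (x i))
      try exact rfl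
    have : ((∏ i, (μ0 - x i)) * ∏ i, v.eval (x i)) * Vand x ^ 2
        = Matrix.det (A x) * Matrix.det (Matrix.of fun i k' => (gfam k').eval (x i)) := by
      rw [hAdet x, h2]; ring
    rw [this, hexpand x, Finset.sum_mul]
    refine Finset.sum_congr rfl fun k _ => ?_
    ring
  rw [hLHSfun]
  rw [integral_finset_sum _ (fun k _ => ((integrable_det_det β hQ
    (fun j => π ((k.succAbove j : Fin (N + 1)) : ℕ)) gfam).const_mul _))]
  have hterm : ∀ k : Fin (N + 1),
      (∫ x : Fin N → ℝ, ((-1 : ℝ) ^ (N + (k : ℕ)) * (π (k : ℕ)).eval μ0) *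
          ((Matrix.det (B k x)) *
            (Matrix.det (Matrix.of fun i k' => (gfam k').eval (x i))))
          ∂(Measure.pi fun _ => β))
      = ((-1 : ℝ) ^ (N + (k : ℕ)) * (π (k : ℕ)).eval μ0) * ((N.factorial : ℝ) *
          Matrix.det (Matrix.of fun j l =>
            ∫ t, (π ((k.succAbove j : Fin (N + 1)) : ℕ)).eval t * (gfam l).eval t ∂β)) := by
    intro k
    rw [integral_const_mul]
    congr 1
    exact andreief β hQ (fun j => π ((k.succAbove j : Fin (N + 1)) : ℕ)) gfam
  simp_rw [hterm]
  -- all terms with k ≠ last vanish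
  rw [Finset.sum_eq_single (Fin.last N)]
  · -- main term
    have hsA : ∀ j : Fin N, (((Fin.last N).succAbove j : Fin (N + 1)) : ℕ) = (j : ℕ) := by
      intro j; rw [Fin.succAbove_last]; simp
    have : (Matrix.of fun j l : Fin N =>
        ∫ t, (π (((Fin.last N).succAbove j : Fin (N + 1)) : ℕ)).eval t * (gfam l).eval t ∂β)
        = Matrix.diagonal d := by
      rw [← hdiagM]
      ext j l
      simp only [Matrix.of_apply]
      rw [hsA j]
      try rfl
    rw [this, Matrix.det_diagonal, hRHS]
    have hsgn : (-1 : ℝ) ^ (N + ((Fin.last N : Fin (N + 1)) : ℕ)) = 1 := by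
      simp only [Fin.val_last]
      exact Even.neg_one_pow ⟨N, by ring⟩
    rw [hsgn]
    simp only [Fin.val_last]
    try ring
  · -- vanishing terms
    intro k _ hk
    have hkN : (k : ℕ) < N := by
      have h1 := k.isLt
      have h2 : (k : ℕ) ≠ N := fun h => hk (Fin.ext (by simp [h]))
      omega
    set j0 : Fin N := ⟨N - 1, by omega⟩ with hj0
    have hsj0 : ((k.succAbove j0 : Fin (N + 1)) : ℕ) = N := by
      rw [Fin.succAbove_of_le_castSucc]
      · simp [hj0, Fin.val_succ]; omega
      · rw [Fin.le_def]
        simp [hj0]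
        omega
    have hrow : ∀ l : Fin N,
        (Matrix.of fun j l : Fin N =>
          ∫ t, (π ((k.succAbove j : Fin (N + 1)) : ℕ)).eval t * (gfam l).eval t ∂β) j0 l
          = 0 := by
      intro l
      simp only [Matrix.of_apply]
      rw [hsj0, entry N l]
      exact ho N (l : ℕ) (by have := l.isLt; omega)
    rw [Matrix.det_eq_zero_of_row_eq_zero j0 hrow]
    ring
  · intro h
    exact absurd (Finset.mem_univ _) h

end TelAux

namespace TelAux
open Matrix Equiv

lemma Z_pos {N : ℕ} {Q : ℝ} (β : Measure ℝ) [IsFiniteMeasure β]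
    (hQ : β (Set.Icc (-Q) Q)ᶜ = 0)
    (hposdef : ∀ p : ℝ[X], p ≠ 0 → 0 < ∫ t, (p.eval t) ^ 2 ∂β) :
    0 < ∫ x : Fin N → ℝ, Vand x ^ 2 ∂(Measure.pi fun _ => β) := by
  classical
  set mon : Fin N → ℝ[X] := fun k => X ^ (k : ℕ) with hmon
  have hdeg : ∀ k : Fin N, (mon k).natDegree = (k : ℕ) := fun k => natDegree_X_pow _
  have hmo : ∀ k : Fin N, (mon k).Monic := fun k => monic_X_pow _
  have hint : (fun x : Fin N → ℝ => Vand x ^ 2) = fun x =>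
      (Matrix.det (Matrix.of fun i k => (mon k).eval (x i))) *
      (Matrix.det (Matrix.of fun i k => (mon k).eval (x i))) := by
    funext x; rw [← vand_eq_det x mon hdeg hmo]; ring
  rw [hint, andreief β hQ mon mon]
  set M : Matrix (Fin N) (Fin N) ℝ :=
    Matrix.of fun j k => ∫ t, (mon j).eval t * (mon k).eval t ∂β with hM
  have hint2 : ∀ (j k : Fin N),
      Integrable (fun t : ℝ => t ^ (j : ℕ) * t ^ (k : ℕ)) β := by
    intro j k
    have := integrable_poly β hQ (X ^ ((j : ℕ) + (k : ℕ)))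
    simpa [pow_add] using this
  have hMjk : ∀ j k : Fin N, M j k = ∫ t, t ^ (j : ℕ) * t ^ (k : ℕ) ∂β := by
    intro j k; simp [hM, hmon]
  have hpos : M.PosDef := by
    refine Matrix.PosDef.of_dotProduct_mulVec_pos ?_ ?_
    · ext j k
      simp only [Matrix.conjTranspose_apply, star_trivial]
      rw [hMjk, hMjk]
      congr 1
      funext t
      ring
    · intro y hy
      set p : ℝ[X] := ∑ k : Fin N, Polynomial.C (y k) * X ^ (k : ℕ) with hp
      have hev : ∀ t : ℝ, p.eval t = ∑ k : Fin N, y k * t ^ (k : ℕ) := by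
        intro t; simp [hp, eval_finset_sum]
      have hp0 : p ≠ 0 := by
        obtain ⟨j0, hj0⟩ := Function.ne_iff.mp hy
        intro hcon
        apply hj0
        have : p.coeff (j0 : ℕ) = y j0 := by
          simp [hp, finset_sum_coeff, coeff_C_mul, coeff_X_pow, Fin.val_eq_val]
        rw [hcon] at this
        simpa using this.symm
      have hquad : star y ⬝ᵥ M *ᵥ y = ∫ t, (p.eval t) ^ 2 ∂β := by
        have hsq : (fun t : ℝ => (p.eval t) ^ 2)
            = fun t => ∑ j : Fin N, ∑ k : Fin N,
                (y j * y k) * (t ^ (j : ℕ) * t ^ (k : ℕ)) := by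
          funext t
          rw [hev, sq, Finset.sum_mul_sum]
          refine Finset.sum_congr rfl fun j _ => Finset.sum_congr rfl fun k _ => ?_
          ring
        rw [hsq]
        rw [integral_finset_sum _ (fun j _ => integrable_finset_sum _
          (fun k _ => (hint2 j k).const_mul _))]
        have : ∀ j : Fin N,
            ∫ t, ∑ k : Fin N, (y j * y k) * (t ^ (j : ℕ) * t ^ (k : ℕ)) ∂β
            = ∑ k : Fin N, (y j * y k) * ∫ t, t ^ (j : ℕ) * t ^ (k : ℕ) ∂β := by
          intro j
          rw [integral_finset_sum _ (fun k _ => (hint2 j k).const_mul _)]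
          exact Finset.sum_congr rfl fun k _ => integral_const_mul _ _
        simp_rw [this]
        rw [dotProduct]
        refine Finset.sum_congr rfl fun j _ => ?_
        rw [star_trivial, Matrix.mulVec, dotProduct, Finset.mul_sum]
        refine Finset.sum_congr rfl fun k _ => ?_
        rw [hMjk]
        ring
      rw [hquad]
      exact hposdef p hp0
  have h1 : (0 : ℝ) < (N.factorial : ℝ) := by
    exact_mod_cast Nat.factorial_pos N
  exact mul_pos h1 hpos.det_pos

end TelAux

namespace TelAux

lemma oneD {Q : ℝ} (β : Measure ℝ) [IsFiniteMeasure β]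
    (hQ : β (Set.Icc (-Q) Q)ᶜ = 0) (w : ℝ[X])
    (hw : ∀ t ∈ Set.Icc (-Q) Q, 0 ≤ w.eval t) (g : ℝ → ℝ) :
    ∫ t, g t ∂(β.withDensity fun t => ENNReal.ofReal (w.eval t))
      = ∫ t, g t * w.eval t ∂β := by
  have hmeas : Measurable fun t => (w.eval t).toNNReal :=
    (w.continuous).measurable.real_toNNReal
  rw [show (fun t => ENNReal.ofReal (w.eval t))
      = (fun t => (((w.eval t).toNNReal : NNReal) : ENNReal)) from rfl]
  rw [integral_withDensity_eq_integral_smul hmeas g]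
  refine integral_congr_ae ?_
  filter_upwards [ae_mem_Icc β hQ] with t ht
  rw [NNReal.smul_def, Real.coe_toNNReal _ (hw t ht), smul_eq_mul, mul_comm]

end TelAux


/-- Telescoping of partition functions: the average of `∏_j ∏_i (μ_j - x_i)` equals the
product `∏_j π_N^{[j]}(μ_{j+1})` of monic orthogonal polynomials with respect to the
successively modified measures. -/
theorem average_product_eq_telescoping_product (α : Measure ℝ) [IsFiniteMeasure α] (Q : ℝ)
    (hQ : α (Set.Icc (-Q) Q)ᶜ = 0)
    (hposdef : ∀ p : Polynomial ℝ, p ≠ 0 → 0 < ∫ t, (p.eval t) ^ 2 ∂α)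
    (L N : ℕ) (μ : Fin L → ℝ) (hμ : Function.Injective μ) (hμQ : ∀ i, Q < μ i)
    -- the modified measures dα^{[j]}(t) = ∏_{k<j} (μ_k - t) dα(t)
    (αm : Fin L → Measure ℝ)
    (hαm : ∀ j, αm j = α.withDensity
      (fun t => ENNReal.ofReal (∏ k ∈ Finset.Iio j, (μ k - t))))
    -- πm j is the system of monic orthogonal polynomials for dα^{[j]}
    (πm : Fin L → ℕ → Polynomial ℝ)
    (hmonic : ∀ j k, (πm j k).Monic) (hdeg : ∀ j k, (πm j k).natDegree = k)
    (horth : ∀ j, ∀ k l, k ≠ l →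
      ∫ t, (πm j k).eval t * (πm j l).eval t ∂(αm j) = 0)
    (Z : ℝ)
    (hZ : Z = ∫ x : Fin N → ℝ, (Vand x) ^ 2 ∂(Measure.pi fun _ => α)) :
    (1 / Z) * ∫ x : Fin N → ℝ, (∏ j : Fin L, ∏ i, (μ j - x i)) * (Vand x) ^ 2
        ∂(Measure.pi fun _ => α)
      = ∏ j : Fin L, (πm j N).eval (μ j) := by
  classical
  have hZpos : 0 < Z := by
    rw [hZ]; exact TelAux.Z_pos α hQ hposdef
  have hZne : Z ≠ 0 := ne_of_gt hZpos
  have main : ∀ m : ℕ, m ≤ L →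
      (∫ x : Fin N → ℝ,
        (∏ j ∈ Finset.univ.filter (fun j : Fin L => (j : ℕ) < m), ∏ i, (μ j - x i)) *
          Vand x ^ 2 ∂(Measure.pi fun _ => α))
      = (∏ j ∈ Finset.univ.filter (fun j : Fin L => (j : ℕ) < m),
          (πm j N).eval (μ j)) * Z := by
    intro m
    induction m with
    | zero =>
      intro _
      have he : Finset.univ.filter (fun j : Fin L => (j : ℕ) < 0) = ∅ := by
        ext j; simp
      rw [he]
      simp only [Finset.prod_empty, one_mul]
      exact hZ.symm
    | succ m ih =>
      intro hm
      have hmL : m < L := hm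
      have ihm := ih (Nat.le_of_succ_le hm)
      set jm : Fin L := ⟨m, hmL⟩ with hjm
      set S : Finset (Fin L) := Finset.univ.filter (fun j : Fin L => (j : ℕ) < m) with hS
      have hSm : Finset.univ.filter (fun j : Fin L => (j : ℕ) < m + 1) = insert jm S := by
        ext j
        simp only [Finset.mem_filter, Finset.mem_univ, true_and, Finset.mem_insert, hS, hjm,
          Fin.ext_iff]
        omega
      have hSIio : S = Finset.Iio jm := by
        ext j
        simp only [Finset.mem_filter, Finset.mem_univ, true_and, Finset.mem_Iio, hS, hjm,
          Fin.lt_def]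
      have hjmS : jm ∉ S := by simp [hS, hjm]
      set v : Polynomial ℝ := ∏ j ∈ S, (Polynomial.C (μ j) - Polynomial.X) with hv
      have hveval : ∀ t : ℝ, v.eval t = ∏ j ∈ S, (μ j - t) := by
        intro t; simp [hv, eval_prod]
      have hvnn : ∀ t ∈ Set.Icc (-Q) Q, 0 ≤ v.eval t := by
        intro t ht
        rw [hveval]
        refine Finset.prod_nonneg fun j _ => ?_
        have h1 := hμQ j
        have h2 := ht.2
        linarith
      have ho : ∀ k l : ℕ, k ≠ l →
          ∫ t, (πm jm k).eval t * (πm jm l).eval t * v.eval t ∂α = 0 := by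
        intro k l hkl
        have h0 := horth jm k l hkl
        rw [hαm jm] at h0
        have hwd : (fun t => ENNReal.ofReal (∏ k ∈ Finset.Iio jm, (μ k - t)))
            = fun t => ENNReal.ofReal (v.eval t) := by
          funext t; rw [hveval, hSIio]
        rw [hwd] at h0
        have h1 := TelAux.oneD α hQ v hvnn
          (fun t => (πm jm k).eval t * (πm jm l).eval t)
        exact h1.symm.trans h0
      have hbridge : ∀ x : Fin N → ℝ,
          (∏ j ∈ S, ∏ i, (μ j - x i)) = ∏ i, v.eval (x i) := by
        intro x
        rw [Finset.prod_comm]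
        exact Finset.prod_congr rfl fun i _ => (hveval (x i)).symm
      have hstep := TelAux.step (N := N) α hQ v (πm jm) (hmonic jm) (hdeg jm) ho (μ jm)
      rw [hSm, Finset.prod_insert hjmS]
      have hfun1 : (fun x : Fin N → ℝ =>
          (∏ j ∈ insert jm S, ∏ i, (μ j - x i)) * Vand x ^ 2)
          = fun x => ((∏ i, (μ jm - x i)) * ∏ i, v.eval (x i)) * Vand x ^ 2 := by
        funext x
        rw [Finset.prod_insert hjmS, hbridge x]
      have hfun2 : (fun x : Fin N → ℝ => (∏ j ∈ S, ∏ i, (μ j - x i)) * Vand x ^ 2)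
          = fun x => (∏ i, v.eval (x i)) * Vand x ^ 2 := by
        funext x; rw [hbridge x]
      rw [hfun1, hstep, ← hfun2, ihm]
      ring
  have huniv : Finset.univ.filter (fun j : Fin L => (j : ℕ) < L) = Finset.univ := by
    ext j; simp [j.isLt]
  have hL := main L le_rfl
  rw [huniv] at hL
  rw [hL, one_div, mul_comm _ Z, ← mul_assoc, inv_mul_cancel₀ hZne, one_mul]
end

section
/- Uvarov's formula (pure poles): for 0 ≤ m ≤ n, the n-th monic orthogonal polynomial π_n^{[0,m]} with respect to the measure dα(t)/∏_{j=1}^{m}(ε_j − t) equals the ratio of the (m+1)×(m+1) determinant with rows (h_{n−m}(εᵢ),…,h_n(εᵢ)) for i=1,…,m and last row (π_{n−m}(t),…,π_n(t)), divided by the m×m determinant det(h_{n−m+j−1}(εᵢ)), where h_k(ε) = (1/2πi)∫ π_k(t)dα(t)/(t−ε). -/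
open MeasureTheory Polynomial Matrix

lemma uv_ae_mem (α : Measure ℝ) {Q : ℝ} (hQ : α (Set.Icc (-Q) Q)ᶜ = 0) :
    ∀ᵐ x ∂α, x ∈ Set.Icc (-Q) Q := by
  rw [MeasureTheory.ae_iff]
  exact hQ

lemma uv_integrable (α : Measure ℝ) [IsFiniteMeasure α] {Q : ℝ}
    (hQ : α (Set.Icc (-Q) Q)ᶜ = 0) {f : ℝ → ℝ} (hf : Measurable f) {C : ℝ}
    (hC : ∀ x ∈ Set.Icc (-Q) Q, |f x| ≤ C) : Integrable f α := by
  refine (integrable_const C).mono' hf.aestronglyMeasurable ?_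
  filter_upwards [uv_ae_mem α hQ] with x hx
  simpa [Real.norm_eq_abs] using hC x hx

lemma uv_orth_lower (μ : Measure ℝ) (π : ℕ → Polynomial ℝ)
    (hm : ∀ j, (π j).Monic) (hd : ∀ j, (π j).natDegree = j)
    (hint : ∀ p : Polynomial ℝ, Integrable (fun t => p.eval t) μ)
    (ho : ∀ j k, j ≠ k → ∫ t, (π j).eval t * (π k).eval t ∂μ = 0) :
    ∀ (l : ℕ) (q : Polynomial ℝ), q.natDegree < l →
      ∫ t, (π l).eval t * q.eval t ∂μ = 0 := by
  have main : ∀ d, ∀ q : Polynomial ℝ, q.natDegree ≤ d → ∀ l, q.natDegree < l →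
      ∫ t, (π l).eval t * q.eval t ∂μ = 0 := by
    intro d
    induction d using Nat.strong_induction_on with
    | _ d IH =>
      intro q hqd l hql
      by_cases hq0 : q = 0
      · simp [hq0]
      · set e := q.natDegree with he
        set q' := q - C q.leadingCoeff * π e with hq'def
        have hCne : C q.leadingCoeff ≠ 0 := by
          simpa using (Polynomial.leadingCoeff_ne_zero.mpr hq0)
        have hπe0 : π e ≠ 0 := (hm e).ne_zero
        have hdegeq : q.degree = (C q.leadingCoeff * π e).degree := by
          rw [Polynomial.degree_eq_natDegree hq0,
            Polynomial.degree_eq_natDegree (mul_ne_zero hCne hπe0)]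
          congr 1
          rw [Polynomial.natDegree_mul hCne hπe0, Polynomial.natDegree_C, hd e, zero_add]
        have hlceq : q.leadingCoeff = (C q.leadingCoeff * π e).leadingCoeff := by
          rw [Polynomial.leadingCoeff_mul, Polynomial.leadingCoeff_C, (hm e).leadingCoeff,
            mul_one]
        have hdlt : q'.degree < q.degree := Polynomial.degree_sub_lt hdegeq hq0 hlceq
        have hq'lt : q' = 0 ∨ q'.natDegree < e := by
          by_cases h0 : q' = 0
          · exact Or.inl h0
          · exact Or.inr (Polynomial.natDegree_lt_natDegree h0 hdlt)
        have hsplit : ∀ x : ℝ, (π l).eval x * q.eval x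
            = q.leadingCoeff * ((π l).eval x * (π e).eval x) + (π l).eval x * q'.eval x := by
          intro x
          simp only [hq'def, Polynomial.eval_sub, Polynomial.eval_mul, Polynomial.eval_C]
          ring
        have hint1 : Integrable (fun x => (π l).eval x * (π e).eval x) μ := by
          simpa [Polynomial.eval_mul] using hint (π l * π e)
        have hint2 : Integrable (fun x => (π l).eval x * q'.eval x) μ := by
          simpa [Polynomial.eval_mul] using hint (π l * q')
        calc ∫ x, (π l).eval x * q.eval x ∂μ
            = ∫ x, (q.leadingCoeff * ((π l).eval x * (π e).eval x)
                + (π l).eval x * q'.eval x) ∂μ := by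
              exact integral_congr_ae (Filter.Eventually.of_forall fun x => hsplit x)
          _ = q.leadingCoeff * ∫ x, (π l).eval x * (π e).eval x ∂μ
                + ∫ x, (π l).eval x * q'.eval x ∂μ := by
              rw [integral_add (hint1.const_mul _) hint2, MeasureTheory.integral_const_mul]
          _ = 0 := by
              have h1 : ∫ x, (π l).eval x * (π e).eval x ∂μ = 0 :=
                ho l e (by omega)
              rcases hq'lt with h0 | hlt
              · simp [h1, h0]
              · have h2 := IH q'.natDegree (by omega) q' le_rfl l (by omega)
                simp [h1, h2]
  intro l q hql
  exact main q.natDegree q le_rfl l hql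

lemma uv_partial_fraction {m : ℕ} (ε : Fin m → ℝ) (hε : Function.Injective ε)
    (s : Finset (Fin m)) (q : Polynomial ℝ) :
    ∃ (r : Polynomial ℝ) (B : Fin m → ℝ),
      (r = 0 ∨ r.natDegree + s.card ≤ q.natDegree) ∧
      ∀ t : ℝ, (∀ i, ε i ≠ t) →
        q.eval t / ∏ i ∈ s, (ε i - t) = r.eval t + ∑ i ∈ s, B i / (ε i - t) := by
  classical
  induction s using Finset.induction_on with
  | empty =>
    exact ⟨q, 0, Or.inr (by simp), fun t _ => by simp⟩
  | @insert a s ha IH =>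
    obtain ⟨r, B, hrdeg, hPF⟩ := IH
    set u := r /ₘ (X - C (ε a)) with hu_def
    have hmon : (X - C (ε a)).Monic := monic_X_sub_C (ε a)
    have hru : r = (X - C (ε a)) * u + C (r.eval (ε a)) := by
      conv_lhs => rw [← Polynomial.modByMonic_add_div r (X - C (ε a))]
      rw [Polynomial.modByMonic_X_sub_C_eq_C_eval]
      ring
    have hudeg : u = 0 ∨ u.natDegree + (s.card + 1) ≤ q.natDegree := by
      by_cases hu0 : u = 0
      · exact Or.inl hu0
      · rcases hrdeg with hr0 | hrle
        · left; rw [hu_def, hr0]; exact Polynomial.zero_divByMonic _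
        · right
          have hXu : ((X - C (ε a)) * u).natDegree = u.natDegree + 1 := by
            rw [Polynomial.natDegree_mul (Polynomial.X_sub_C_ne_zero (ε a)) hu0,
              Polynomial.natDegree_X_sub_C]
            omega
          have hrd : r.natDegree = u.natDegree + 1 := by
            conv_lhs => rw [hru]
            rw [Polynomial.natDegree_add_C, hXu]
          omega
    set B' : Fin m → ℝ := fun i => if i = a then r.eval (ε a) - ∑ i ∈ s, B i / (ε a - ε i)
        else B i / (ε a - ε i) with hB'_def
    refine ⟨-u, B', ?_, ?_⟩
    · rcases hudeg with h0 | hle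
      · left; rw [h0, neg_zero]
      · right
        rw [Polynomial.natDegree_neg, Finset.card_insert_of_notMem ha]
        omega
    · intro t ht
      have hP : (∏ i ∈ s, (ε i - t)) ≠ 0 :=
        Finset.prod_ne_zero_iff.2 (fun i _ => sub_ne_zero.2 (ht i))
      have hat : ε a - t ≠ 0 := sub_ne_zero.2 (ht a)
      have key := hPF t ht
      rw [Finset.prod_insert ha, Finset.sum_insert ha]
      have hrt : r.eval t = (t - ε a) * u.eval t + r.eval (ε a) := by
        conv_lhs => rw [hru]
        simp only [Polynomial.eval_add, Polynomial.eval_mul, Polynomial.eval_sub,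
          Polynomial.eval_X, Polynomial.eval_C]
        try ring
      have step1 : q.eval t / ((ε a - t) * ∏ i ∈ s, (ε i - t))
          = (r.eval t + ∑ i ∈ s, B i / (ε i - t)) / (ε a - t) := by
        rw [mul_comm, ← div_div, key]
      rw [step1, add_div, Finset.sum_div]
      have hterm : ∀ i ∈ s, B i / (ε i - t) / (ε a - t)
          = B i / (ε a - ε i) / (ε i - t) - B i / (ε a - ε i) / (ε a - t) := by
        intro i hi
        have hai' : a ≠ i := by rintro rfl; exact ha hi
        have hai : ε a - ε i ≠ 0 := sub_ne_zero.2 (hε.ne hai')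
        have hit : ε i - t ≠ 0 := sub_ne_zero.2 (ht i)
        field_simp
        ring
      rw [Finset.sum_congr rfl hterm, Finset.sum_sub_distrib, ← Finset.sum_div]
      have hrdiv : r.eval t / (ε a - t) = -(u.eval t) + r.eval (ε a) / (ε a - t) := by
        rw [hrt]; field_simp; ring
      rw [hrdiv]
      have hB'a : B' a = r.eval (ε a) - ∑ i ∈ s, B i / (ε a - ε i) := by
        rw [hB'_def]; simp
      have hBsum : (∑ i ∈ s, B' i / (ε i - t)) = ∑ i ∈ s, B i / (ε a - ε i) / (ε i - t) := by
        refine Finset.sum_congr rfl fun i hi => ?_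
        have hia : ¬ (i = a) := by rintro rfl; exact ha hi
        rw [hB'_def]; simp [hia]
      rw [hB'a, hBsum]
      simp only [Polynomial.eval_neg]
      ring

/-- Uvarov's formula (pure poles): the monic orthogonal polynomial for the measure
`dα(t)/∏_j (ε_j - t)` as a ratio of determinants built from Cauchy transforms. -/
theorem uvarov_formula (α : Measure ℝ) [IsFiniteMeasure α] (Q : ℝ)
    (hQ : α (Set.Icc (-Q) Q)ᶜ = 0)
    (hposdef : ∀ p : Polynomial ℝ, p ≠ 0 → 0 < ∫ t, (p.eval t) ^ 2 ∂α)
    (π : ℕ → Polynomial ℝ)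
    (hmonic : ∀ j, (π j).Monic) (hdeg : ∀ j, (π j).natDegree = j)
    (horth : ∀ j k, j ≠ k → ∫ t, (π j).eval t * (π k).eval t ∂α = 0)
    -- Cauchy transforms h_k(ε) = (1/2πi) ∫ π_k(t)/(t-ε) dα(t)
    (h : ℕ → ℝ → ℂ)
    (hh : ∀ k e, h k e =
      (1 / (2 * (Real.pi : ℂ) * Complex.I)) *
        ∫ t, Complex.ofReal ((π k).eval t) / ((t : ℂ) - (e : ℂ)) ∂α)
    (m n : ℕ) (hmn : m ≤ n)
    (ε : Fin m → ℝ) (hε : Function.Injective ε) (hεQ : ∀ i, Q < ε i)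
    -- the modified measure dα^{[0,m]}(t) = ∏_j (ε_j - t)⁻¹ dα(t)
    (α' : Measure ℝ)
    (hα' : α' = α.withDensity (fun t => ENNReal.ofReal (∏ j, (ε j - t))⁻¹))
    -- its monic orthogonal polynomials
    (π' : ℕ → Polynomial ℝ)
    (hmonic' : ∀ j, (π' j).Monic) (hdeg' : ∀ j, (π' j).natDegree = j)
    (horth' : ∀ j k, j ≠ k → ∫ t, (π' j).eval t * (π' k).eval t ∂α' = 0)
    (t : ℝ) :
    Complex.ofReal ((π' n).eval t) =
      (Matrix.of fun i j : Fin (m + 1) =>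
          if hi : (i : ℕ) < m then h (n - m + j) (ε ⟨i, hi⟩)
          else Complex.ofReal ((π (n - m + j)).eval t)).det /
        (Matrix.of fun i j : Fin m => h (n - m + j) (ε i)).det := by
  classical
  have hα0 : α ≠ 0 := by
    intro h0
    have := hposdef 1 one_ne_zero
    rw [h0] at this; simp at this
  have hQ0 : 0 ≤ Q := by
    by_contra hq
    push_neg at hq
    have hemp : Set.Icc (-Q) Q = ∅ := Set.Icc_eq_empty (by intro hc; simp at hc; linarith)
    have huniv : α Set.univ = 0 := by
      rw [← Set.compl_empty, ← hemp]; exact hQ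
    exact hα0 (Measure.measure_univ_eq_zero.mp huniv)
  have hae : ∀ᵐ x ∂α, x ∈ Set.Icc (-Q) Q := by
    rw [MeasureTheory.ae_iff]; exact hQ
  set W : ℝ → ℝ := fun t => ∏ j, (ε j - t) with hW_def
  have hWcont : Continuous W := by
    apply continuous_finset_prod
    intro i _
    exact continuous_const.sub continuous_id
  set w : ℝ → NNReal := fun t => Real.toNNReal (W t)⁻¹ with hw_def
  have hwmeas : Measurable w := measurable_real_toNNReal.comp hWcont.measurable.inv
  have hα'w : α' = α.withDensity (fun t => ((w t : NNReal) : ENNReal)) := by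
    rw [hα']; rfl
  set c₁ : ℝ := ∏ j, (ε j - Q) with hc1
  set c₂ : ℝ := ∏ j, (ε j + Q) with hc2
  have hc1pos : 0 < c₁ := Finset.prod_pos (fun i _ => by have := hεQ i; linarith)
  have hc2pos : 0 < c₂ := Finset.prod_pos (fun i _ => by have := hεQ i; linarith)
  have hWlb : ∀ x ∈ Set.Icc (-Q) Q, c₁ ≤ W x := by
    intro x hx
    exact Finset.prod_le_prod (fun i _ => by have := hεQ i; linarith)
      (fun i _ => by have := hx.2; linarith)
  have hWub : ∀ x ∈ Set.Icc (-Q) Q, W x ≤ c₂ := by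
    intro x hx
    exact Finset.prod_le_prod (fun i _ => by have h1 := hεQ i; have := hx.2; linarith)
      (fun i _ => by have := hx.1; linarith)
  have hWpos : ∀ x ∈ Set.Icc (-Q) Q, 0 < W x := fun x hx => lt_of_lt_of_le hc1pos (hWlb x hx)
  have hwx : ∀ x ∈ Set.Icc (-Q) Q, (w x : ℝ) = (W x)⁻¹ := fun x hx =>
    Real.coe_toNNReal _ (inv_nonneg.2 (hWpos x hx).le)
  have hwub : ∀ x ∈ Set.Icc (-Q) Q, (w x : ℝ) ≤ c₁⁻¹ := by
    intro x hx
    rw [hwx x hx]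
    have h1 := hWlb x hx
    gcongr
  have hwlb : ∀ x ∈ Set.Icc (-Q) Q, c₂⁻¹ ≤ (w x : ℝ) := by
    intro x hx
    rw [hwx x hx]
    have h1 := hWub x hx
    have h2 := hWpos x hx
    gcongr
  have Iconv : ∀ f : ℝ → ℝ, ∫ x, f x ∂α' = ∫ x, (w x : ℝ) * f x ∂α := by
    intro f
    rw [hα'w, integral_withDensity_eq_integral_smul hwmeas f]
    simp [NNReal.smul_def]
  have hbound : ∀ p : Polynomial ℝ, ∃ C, 0 ≤ C ∧ ∀ x ∈ Set.Icc (-Q) Q, |p.eval x| ≤ C := by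
    intro p
    obtain ⟨C, hC⟩ := (isCompact_Icc (a := -Q) (b := Q)).exists_bound_of_continuousOn
      p.continuous.continuousOn
    refine ⟨C, ?_, fun x hx => by simpa [Real.norm_eq_abs] using hC x hx⟩
    exact le_trans (norm_nonneg _) (hC Q ⟨by linarith, le_rfl⟩)
  have hpint : ∀ p : Polynomial ℝ, Integrable (fun t => p.eval t) α := by
    intro p
    obtain ⟨C, _, hC⟩ := hbound p
    exact uv_integrable α hQ p.continuous.measurable hC
  have hwcoe : Measurable (fun t => (w t : ℝ)) := measurable_coe_nnreal_real.comp hwmeas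
  have hwint : ∀ p : Polynomial ℝ, Integrable (fun t => (w t : ℝ) * p.eval t) α := by
    intro p
    obtain ⟨C, hC0, hC⟩ := hbound p
    refine uv_integrable α hQ (hwcoe.mul p.continuous.measurable) (C := c₁⁻¹ * C) ?_
    intro x hx
    rw [abs_mul, abs_of_nonneg (NNReal.coe_nonneg _)]
    exact mul_le_mul (hwub x hx) (hC x hx) (abs_nonneg _) (inv_nonneg.2 hc1pos.le)
  have hdivint : ∀ (p : Polynomial ℝ) (i : Fin m),
      Integrable (fun t => p.eval t / (t - ε i)) α := by
    intro p i
    obtain ⟨C, hC0, hC⟩ := hbound p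
    have hεad : 0 < ε i - Q := by have := hεQ i; linarith
    refine uv_integrable α hQ (p.continuous.measurable.div
      (measurable_id.sub measurable_const)) (C := C / (ε i - Q)) ?_
    intro x hx
    rw [abs_div]
    have habs : ε i - Q ≤ |x - ε i| := by
      rw [abs_sub_comm, abs_of_nonneg (by have := hεQ i; have := hx.2; linarith)]
      have := hx.2; linarith
    exact div_le_div₀ hC0 (hC x hx) hεad habs
  have hdivint2 : ∀ (p : Polynomial ℝ) (i : Fin m),
      Integrable (fun x => p.eval x / (ε i - x)) α := by
    intro p i
    have heq : (fun x => p.eval x / (ε i - x)) = fun x => -(p.eval x / (x - ε i)) := by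
      funext x
      rw [← neg_sub x (ε i), div_neg]
    rw [heq]
    exact (hdivint p i).neg
  set gg : ℕ → Fin m → ℝ := fun k i => ∫ x, (π k).eval x / (x - ε i) ∂α with hgg_def
  have hgneg : ∀ (p : Polynomial ℝ) (i : Fin m),
      ∫ x, p.eval x / (ε i - x) ∂α = - ∫ x, p.eval x / (x - ε i) ∂α := by
    intro p i
    rw [← MeasureTheory.integral_neg]
    congr 1
    funext x
    rw [← neg_sub x (ε i), div_neg]
  have hhg : ∀ (k : ℕ) (i : Fin m),
      h k (ε i) = (1 / (2 * (Real.pi : ℂ) * Complex.I)) * ((gg k i : ℝ) : ℂ) := by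
    intro k i
    rw [hh k (ε i)]
    congr 1
    have hcong : (fun x : ℝ => (((π k).eval x : ℝ) : ℂ) / ((x : ℂ) - ((ε i : ℝ) : ℂ)))
        = fun x : ℝ => ((((π k).eval x / (x - ε i) : ℝ)) : ℂ) := by
      funext x
      push_cast
      ring
    rw [hcong, hgg_def]
    exact integral_ofReal
  have hpos : ∀ p : Polynomial ℝ, p ≠ 0 →
      0 < ∫ x, (w x : ℝ) * (p.eval x * p.eval x) ∂α := by
    intro p hp
    have hint1 : Integrable (fun x => (w x : ℝ) * (p.eval x * p.eval x)) α := by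
      simpa [Polynomial.eval_mul] using hwint (p * p)
    have hint2 : Integrable (fun x => c₂⁻¹ * (p.eval x * p.eval x)) α := by
      have := (hpint (p * p)).const_mul c₂⁻¹
      simpa [Polynomial.eval_mul] using this
    have hmono : c₂⁻¹ * ∫ x, p.eval x * p.eval x ∂α
        ≤ ∫ x, (w x : ℝ) * (p.eval x * p.eval x) ∂α := by
      rw [← MeasureTheory.integral_const_mul]
      refine integral_mono_ae hint2 hint1 ?_
      filter_upwards [hae] with x hx
      exact mul_le_mul_of_nonneg_right (hwlb x hx) (mul_self_nonneg _)
    have hpp : 0 < ∫ x, p.eval x * p.eval x ∂α := by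
      have := hposdef p hp
      simpa [pow_two] using this
    calc (0:ℝ) < c₂⁻¹ * ∫ x, p.eval x * p.eval x ∂α := mul_pos (inv_pos.2 hc2pos) hpp
      _ ≤ _ := hmono
  have hWprod : ∀ x, W x = ∏ i ∈ Finset.univ, (ε i - x) := fun x => rfl
  have key : ∀ q : Polynomial ℝ, q.natDegree < n → ∃ B : Fin m → ℝ, ∀ l, n ≤ l + m →
      ∫ x, (w x : ℝ) * ((π l).eval x * q.eval x) ∂α = -∑ i, B i * gg l i := by
    intro q hq
    obtain ⟨r, B, hrd, hPF⟩ := uv_partial_fraction ε hε Finset.univ q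
    refine ⟨B, fun l hl => ?_⟩
    have hrdeg : r = 0 ∨ r.natDegree < l := by
      rcases hrd with h0 | hle
      · exact Or.inl h0
      · right
        rw [Finset.card_univ, Fintype.card_fin] at hle
        omega
    have hstep : ∀ᵐ x ∂α, (w x : ℝ) * ((π l).eval x * q.eval x)
        = (π l).eval x * r.eval x + ∑ i, B i * ((π l).eval x / (ε i - x)) := by
      filter_upwards [hae] with x hx
      have hne : ∀ i, ε i ≠ x := by
        intro i hcc
        have h1 := hεQ i
        have h2 := hx.2
        rw [hcc] at h1
        linarith
      have hPFx := hPF x hne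
      have hWx : W x ≠ 0 := (hWpos x hx).ne'
      rw [hwx x hx]
      have h1 : (W x)⁻¹ * ((π l).eval x * q.eval x)
          = (π l).eval x * (q.eval x / W x) := by
        rw [div_eq_mul_inv]; ring
      rw [h1, hWprod x, hPFx, mul_add, Finset.mul_sum]
      congr 1
      refine Finset.sum_congr rfl fun i _ => ?_
      ring
    rw [integral_congr_ae hstep]
    have hint1 : Integrable (fun x => (π l).eval x * r.eval x) α := by
      simpa [Polynomial.eval_mul] using hpint (π l * r)
    have hint2 : Integrable (fun x => ∑ i, B i * ((π l).eval x / (ε i - x))) α :=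
      integrable_finset_sum _ fun i _ => (hdivint2 (π l) i).const_mul (B i)
    rw [MeasureTheory.integral_add hint1 hint2,
      MeasureTheory.integral_finset_sum _ fun i _ => (hdivint2 (π l) i).const_mul (B i)]
    have hfirst : ∫ x, (π l).eval x * r.eval x ∂α = 0 := by
      rcases hrdeg with h0 | hlt
      · simp [h0]
      · exact uv_orth_lower α π hmonic hdeg hpint horth l r hlt
    rw [hfirst, zero_add, ← Finset.sum_neg_distrib]
    refine Finset.sum_congr rfl fun i _ => ?_
    rw [MeasureTheory.integral_const_mul, hgneg (π l) i]
    rw [hgg_def]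
    ring
  set G : Matrix (Fin m) (Fin m) ℝ := Matrix.of (fun i j => gg (n - m + (j : ℕ)) i) with hG_def
  set SM : Fin (m+1) → Matrix (Fin m) (Fin m) ℝ :=
    fun j => Matrix.of (fun i k => gg (n - m + ((j.succAbove k) : ℕ)) i) with hSM_def
  set cvec : Fin (m+1) → ℝ := fun j => (-1 : ℝ) ^ ((m : ℕ) + (j : ℕ)) * (SM j).det
    with hcvec_def
  have expand : ∀ f : Fin (m+1) → ℝ,
      (Matrix.of fun i j : Fin (m+1) =>
        if hi : (i:ℕ) < m then gg (n - m + (j:ℕ)) ⟨i, hi⟩ else f j).det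
      = ∑ j : Fin (m+1), cvec j * f j := by
    intro f
    rw [Matrix.det_succ_row _ (Fin.last m)]
    refine Finset.sum_congr rfl fun j _ => ?_
    have hlast : ¬ (((Fin.last m) : ℕ) < m) := by simp
    have hsub : (Matrix.of fun i j : Fin (m+1) =>
        if hi : (i:ℕ) < m then gg (n - m + (j:ℕ)) ⟨i, hi⟩ else f j).submatrix
        (Fin.last m).succAbove j.succAbove = SM j := by
      ext i k
      simp only [Matrix.submatrix_apply, Fin.succAbove_last, Matrix.of_apply, hSM_def]
      rw [dif_pos (show (((Fin.castSucc i) : ℕ) < m) from by simp [i.isLt])]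
      congr 1 <;> exact Fin.ext (by simp)
    rw [hsub]
    simp only [Matrix.of_apply]
    rw [dif_neg hlast, hcvec_def]
    simp only [Fin.val_last]
    ring
  have hrow : ∀ i0 : Fin m, ∑ j : Fin (m+1), cvec j * gg (n - m + (j:ℕ)) i0 = 0 := by
    intro i0
    have h0 : (Matrix.of fun i j : Fin (m+1) =>
        if hi : (i:ℕ) < m then gg (n - m + (j:ℕ)) ⟨i, hi⟩
        else gg (n - m + (j:ℕ)) i0).det = 0 := by
      apply Matrix.det_zero_of_row_eq (i := Fin.castSucc i0) (j := Fin.last m)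
        (Fin.castSucc_lt_last i0).ne
      funext j
      simp only [Matrix.of_apply]
      rw [dif_pos (show (((Fin.castSucc i0) : ℕ) < m) from by simp [i0.isLt]),
        dif_neg (by simp)]
      congr 1 <;> exact Fin.ext (by simp)
    rw [expand (fun j => gg (n - m + (j:ℕ)) i0)] at h0
    exact h0
  have hclast : cvec (Fin.last m) = G.det := by
    show (-1 : ℝ) ^ ((m : ℕ) + ((Fin.last m : Fin (m+1)) : ℕ)) * (SM (Fin.last m)).det = G.det
    have hSMlast : SM (Fin.last m) = G := by
      ext i k
      simp only [hSM_def, hG_def, Matrix.of_apply, Fin.succAbove_last, Fin.coe_castSucc]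
    rw [hSMlast, Fin.val_last]
    rw [Even.neg_one_pow ⟨m, rfl⟩, one_mul]
  have hD : G.det ≠ 0 := by
    intro hdet
    obtain ⟨v, hv0, hGv⟩ := Matrix.exists_mulVec_eq_zero_iff.mpr hdet
    obtain ⟨j1, hj1⟩ : ∃ j, v j ≠ 0 := Function.ne_iff.mp hv0
    have hm1 : 1 ≤ m := j1.pos
    set s : Polynomial ℝ := ∑ j : Fin m, C (v j) * π (n - m + (j:ℕ)) with hs_def
    have hseval : ∀ x, s.eval x = ∑ j : Fin m, v j * (π (n - m + (j:ℕ))).eval x := by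
      intro x
      rw [hs_def, Polynomial.eval_finset_sum]
      exact Finset.sum_congr rfl fun j _ => by rw [Polynomial.eval_mul, Polynomial.eval_C]
    have hsne : s ≠ 0 := by
      intro hs0
      obtain ⟨j0, hj0mem, hj0max⟩ := Finset.exists_max_image
        (Finset.univ.filter (fun j => v j ≠ 0)) (fun j => (j:ℕ))
        ⟨j1, by simp [hj1]⟩
      have hj0ne : v j0 ≠ 0 := (Finset.mem_filter.mp hj0mem).2
      have hcoeff : s.coeff (n - m + (j0:ℕ)) = v j0 := by
        rw [hs_def, Polynomial.finset_sum_coeff]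
        rw [Finset.sum_eq_single j0]
        · rw [Polynomial.coeff_C_mul,
            show (π (n - m + (j0:ℕ))).coeff (n - m + (j0:ℕ)) = 1 from by
              have hcn := (hmonic (n - m + (j0:ℕ))).coeff_natDegree
              rwa [hdeg] at hcn, mul_one]
        · intro j _ hjne
          rw [Polynomial.coeff_C_mul]
          rcases lt_trichotomy ((j:ℕ)) ((j0:ℕ)) with hlt | heq | hgt
          · rw [Polynomial.coeff_eq_zero_of_natDegree_lt, mul_zero]
            rw [hdeg]; omega
          · exact absurd (Fin.ext heq) hjne
          · have : v j = 0 := by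
              by_contra hvj
              have := hj0max j (Finset.mem_filter.mpr ⟨Finset.mem_univ _, hvj⟩)
              omega
            rw [this, zero_mul]
        · intro hj0
          exact absurd (Finset.mem_univ j0) hj0
      rw [hs0, Polynomial.coeff_zero] at hcoeff
      exact hj0ne hcoeff.symm
    have hsdeg : s.natDegree < n := by
      have hle : s.natDegree ≤ n - 1 := by
        apply Polynomial.natDegree_sum_le_of_forall_le
        intro j _
        refine le_trans (Polynomial.natDegree_C_mul_le _ _) ?_
        rw [hdeg]
        have := j.isLt
        omega
      omega
    obtain ⟨B, hB⟩ := key s hsdeg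
    have hzero : ∫ x, (w x : ℝ) * (s.eval x * s.eval x) ∂α = 0 := by
      have hsplit : ∀ x, (w x : ℝ) * (s.eval x * s.eval x)
          = ∑ j : Fin m, v j * ((w x : ℝ) * ((π (n - m + (j:ℕ))).eval x * s.eval x)) := by
        intro x
        conv_lhs => rw [show s.eval x * s.eval x
          = (∑ j : Fin m, v j * (π (n - m + (j:ℕ))).eval x) * s.eval x from by
            rw [← hseval x]]
        rw [Finset.sum_mul, Finset.mul_sum]
        exact Finset.sum_congr rfl fun j _ => by ring
      have hint3 : ∀ j : Fin m, Integrable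
          (fun x => (w x : ℝ) * ((π (n - m + (j:ℕ))).eval x * s.eval x)) α := by
        intro j
        simpa [Polynomial.eval_mul] using hwint (π (n - m + (j:ℕ)) * s)
      rw [integral_congr_ae (Filter.Eventually.of_forall hsplit),
        MeasureTheory.integral_finset_sum _ fun j _ => (hint3 j).const_mul (v j)]
      have hterm : ∀ j : Fin m, ∫ x, v j * ((w x : ℝ)
          * ((π (n - m + (j:ℕ))).eval x * s.eval x)) ∂α
          = v j * -∑ i, B i * gg (n - m + (j:ℕ)) i := by
        intro j
        rw [MeasureTheory.integral_const_mul, hB (n - m + (j:ℕ)) (by omega)]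
      rw [Finset.sum_congr rfl fun j _ => hterm j]
      have hswap : ∑ j : Fin m, v j * -∑ i, B i * gg (n - m + (j:ℕ)) i
          = -∑ i : Fin m, B i * ∑ j : Fin m, gg (n - m + (j:ℕ)) i * v j := by
        have e1 : ∑ j : Fin m, v j * -∑ i, B i * gg (n - m + (j:ℕ)) i
            = -∑ j : Fin m, ∑ i : Fin m, v j * (B i * gg (n - m + (j:ℕ)) i) := by
          rw [← Finset.sum_neg_distrib]
          refine Finset.sum_congr rfl fun j _ => ?_
          rw [mul_neg, Finset.mul_sum]
        have e2 : ∑ i : Fin m, B i * ∑ j : Fin m, gg (n - m + (j:ℕ)) i * v j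
            = ∑ i : Fin m, ∑ j : Fin m, B i * (gg (n - m + (j:ℕ)) i * v j) :=
          Finset.sum_congr rfl fun i _ => Finset.mul_sum _ _ _
        rw [e1, e2, neg_inj, Finset.sum_comm]
        exact Finset.sum_congr rfl fun i _ => Finset.sum_congr rfl fun j _ => by ring
      rw [hswap]
      have hmv : ∀ i : Fin m, ∑ j : Fin m, gg (n - m + (j:ℕ)) i * v j = 0 := by
        intro i
        have := congrFun hGv i
        simpa [Matrix.mulVec, dotProduct, hG_def] using this
      rw [Finset.sum_congr rfl fun i _ => by rw [hmv i, mul_zero]]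
      simp
    exact absurd hzero (hpos s hsne).ne'
  have hcoeff1 : ∀ k, (π k).coeff k = 1 := by
    intro k
    have hcn := (hmonic k).coeff_natDegree
    rwa [hdeg] at hcn
  have hcoeff1' : ∀ k, (π' k).coeff k = 1 := by
    intro k
    have hcn := (hmonic' k).coeff_natDegree
    rwa [hdeg'] at hcn
  set P : Polynomial ℝ := ∑ j : Fin (m+1), C (cvec j) * π (n - m + (j:ℕ)) with hP_def
  have hPeval : ∀ x, P.eval x = ∑ j : Fin (m+1), cvec j * (π (n - m + (j:ℕ))).eval x := by
    intro x
    rw [hP_def, Polynomial.eval_finset_sum]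
    exact Finset.sum_congr rfl fun j _ => by rw [Polynomial.eval_mul, Polynomial.eval_C]
  have hPdeg : P.natDegree ≤ n := by
    rw [hP_def]
    apply Polynomial.natDegree_sum_le_of_forall_le
    intro j _
    refine le_trans (Polynomial.natDegree_C_mul_le _ _) ?_
    rw [hdeg]
    have := j.isLt
    omega
  have hPcoeff : P.coeff n = cvec (Fin.last m) := by
    rw [hP_def, Polynomial.finset_sum_coeff, Fin.sum_univ_castSucc]
    have hz : ∀ k : Fin m,
        (C (cvec (Fin.castSucc k)) * π (n - m + ((Fin.castSucc k : Fin (m+1)):ℕ))).coeff n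
          = 0 := by
      intro k
      rw [Polynomial.coeff_C_mul, Polynomial.coeff_eq_zero_of_natDegree_lt, mul_zero]
      rw [hdeg, Fin.coe_castSucc]
      have := k.isLt
      omega
    rw [Finset.sum_eq_zero (fun k _ => hz k), zero_add, Polynomial.coeff_C_mul]
    have hidx : n - m + ((Fin.last m : Fin (m+1)) : ℕ) = n := by
      rw [Fin.val_last]; omega
    rw [hidx, hcoeff1 n, mul_one]
  set E : Polynomial ℝ := P - C G.det * π' n with hE_def
  have hEcoeff : E.coeff n = 0 := by
    rw [hE_def, Polynomial.coeff_sub, hPcoeff, hclast, Polynomial.coeff_C_mul,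
      hcoeff1' n, mul_one, sub_self]
  have hEdeg : E ≠ 0 → E.natDegree < n := by
    intro hE0
    have hle : E.natDegree ≤ n := by
      rw [hE_def]
      refine le_trans (Polynomial.natDegree_sub_le _ _) (max_le hPdeg ?_)
      refine le_trans (Polynomial.natDegree_C_mul_le _ _) (le_of_eq (hdeg' n))
    rcases lt_or_eq_of_le hle with hlt | heq
    · exact hlt
    · have := Polynomial.leadingCoeff_ne_zero.mpr hE0
      rw [Polynomial.leadingCoeff, heq, hEcoeff] at this
      exact absurd rfl this
  have hint' : ∀ p : Polynomial ℝ, Integrable (fun x => p.eval x) α' := by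
    intro p
    rw [hα'w, integrable_withDensity_iff_integrable_smul hwmeas]
    simpa [NNReal.smul_def] using hwint p
  have horthlow' := uv_orth_lower α' π' hmonic' hdeg' hint' horth'
  have hEorth : ∀ q : Polynomial ℝ, q.natDegree < n →
      ∫ x, (w x : ℝ) * (E.eval x * q.eval x) ∂α = 0 := by
    intro q hq
    obtain ⟨B, hB⟩ := key q hq
    have hsplit : ∀ x, (w x : ℝ) * (E.eval x * q.eval x)
        = (∑ j : Fin (m+1), cvec j * ((w x : ℝ) * ((π (n - m + (j:ℕ))).eval x * q.eval x)))
          - G.det * ((w x : ℝ) * ((π' n).eval x * q.eval x)) := by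
      intro x
      rw [hE_def]
      simp only [Polynomial.eval_sub, Polynomial.eval_mul, Polynomial.eval_C]
      rw [hPeval x, sub_mul, mul_sub, Finset.sum_mul, Finset.mul_sum]
      congr 1
      · exact Finset.sum_congr rfl fun j _ => by ring
      · ring
    have hintj : ∀ j : Fin (m+1), Integrable
        (fun x => (w x : ℝ) * ((π (n - m + (j:ℕ))).eval x * q.eval x)) α := by
      intro j
      simpa [Polynomial.eval_mul] using hwint (π (n - m + (j:ℕ)) * q)
    have hintn : Integrable (fun x => (w x : ℝ) * ((π' n).eval x * q.eval x)) α := by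
      simpa [Polynomial.eval_mul] using hwint (π' n * q)
    rw [integral_congr_ae (Filter.Eventually.of_forall hsplit),
      MeasureTheory.integral_sub
        (integrable_finset_sum _ fun j _ => (hintj j).const_mul (cvec j))
        (hintn.const_mul G.det),
      MeasureTheory.integral_finset_sum _ fun j _ => (hintj j).const_mul (cvec j)]
    have hfirst : ∑ j : Fin (m+1), ∫ x, cvec j
        * ((w x : ℝ) * ((π (n - m + (j:ℕ))).eval x * q.eval x)) ∂α = 0 := by
      have hterm : ∀ j : Fin (m+1), ∫ x, cvec j
          * ((w x : ℝ) * ((π (n - m + (j:ℕ))).eval x * q.eval x)) ∂α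
          = cvec j * -∑ i, B i * gg (n - m + (j:ℕ)) i := by
        intro j
        rw [MeasureTheory.integral_const_mul, hB (n - m + (j:ℕ)) (by omega)]
      rw [Finset.sum_congr rfl fun j _ => hterm j]
      have e1 : ∑ j : Fin (m+1), cvec j * -∑ i, B i * gg (n - m + (j:ℕ)) i
          = -∑ j : Fin (m+1), ∑ i : Fin m, cvec j * (B i * gg (n - m + (j:ℕ)) i) := by
        rw [← Finset.sum_neg_distrib]
        refine Finset.sum_congr rfl fun j _ => ?_
        rw [mul_neg, Finset.mul_sum]
      rw [e1, Finset.sum_comm, neg_eq_zero]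
      refine Finset.sum_eq_zero fun i _ => ?_
      have e2 : ∑ j : Fin (m+1), cvec j * (B i * gg (n - m + (j:ℕ)) i)
          = B i * ∑ j : Fin (m+1), cvec j * gg (n - m + (j:ℕ)) i := by
        rw [Finset.mul_sum]
        exact Finset.sum_congr rfl fun j _ => by ring
      rw [e2, hrow i, mul_zero]
    have hsecond : ∫ x, (w x : ℝ) * ((π' n).eval x * q.eval x) ∂α = 0 := by
      exact (Iconv (fun x => (π' n).eval x * q.eval x)).symm.trans (horthlow' n q hq)
    rw [hfirst, MeasureTheory.integral_const_mul, hsecond, mul_zero, sub_zero]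
  have hE0 : E = 0 := by
    by_contra hE
    have h1 := hEorth E (hEdeg hE)
    exact absurd h1 (hpos E hE).ne'
  have hPD : P = C G.det * π' n := by
    have := sub_eq_zero.mp hE0
    exact this
  have hreal : (Matrix.of fun i j : Fin (m+1) =>
      if hi : (i:ℕ) < m then gg (n - m + (j:ℕ)) ⟨i, hi⟩
      else (π (n - m + (j:ℕ))).eval t).det = G.det * (π' n).eval t := by
    rw [expand (fun j => (π (n - m + (j:ℕ))).eval t), ← hPeval t, hPD,
      Polynomial.eval_mul, Polynomial.eval_C]
  set cc : ℂ := 1 / (2 * (Real.pi : ℂ) * Complex.I) with hcc_def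
  have hccne : cc ≠ 0 := by
    rw [hcc_def]
    apply one_div_ne_zero
    apply mul_ne_zero (mul_ne_zero two_ne_zero _) Complex.I_ne_zero
    exact_mod_cast Real.pi_ne_zero
  set Nr : Matrix (Fin (m+1)) (Fin (m+1)) ℝ := Matrix.of fun i j =>
      if hi : (i:ℕ) < m then gg (n - m + (j:ℕ)) ⟨i, hi⟩
      else (π (n - m + (j:ℕ))).eval t with hNr_def
  have hMc : (Matrix.of fun i j : Fin (m + 1) =>
      if hi : (i : ℕ) < m then h (n - m + j) (ε ⟨i, hi⟩)
      else Complex.ofReal ((π (n - m + j)).eval t))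
      = Matrix.of fun (i j : Fin (m+1)) => (if (i:ℕ) < m then cc else 1)
          * (Complex.ofRealHom.mapMatrix Nr) i j := by
    ext i j
    simp only [Matrix.of_apply, RingHom.mapMatrix_apply, Matrix.map_apply, hNr_def]
    by_cases hi : (i:ℕ) < m
    · rw [dif_pos hi, dif_pos hi, if_pos hi, hhg, hcc_def]
      rfl
    · rw [dif_neg hi, dif_neg hi, if_neg hi, one_mul]
      rfl
  have hprodv : (∏ i : Fin (m+1), (if (i:ℕ) < m then cc else 1)) = cc ^ m := by
    rw [Fin.prod_univ_castSucc]
    rw [Finset.prod_congr rfl (fun i _ => if_pos (by simp [i.isLt] :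
      (((Fin.castSucc i) : Fin (m+1)) : ℕ) < m))]
    rw [Finset.prod_const, Finset.card_univ, Fintype.card_fin,
      if_neg (by simp : ¬ (((Fin.last m : Fin (m+1)) : ℕ) < m)), mul_one]
  have hnum : (Matrix.of fun i j : Fin (m + 1) =>
      if hi : (i : ℕ) < m then h (n - m + j) (ε ⟨i, hi⟩)
      else Complex.ofReal ((π (n - m + j)).eval t)).det
      = cc ^ m * Complex.ofReal (G.det * (π' n).eval t) := by
    rw [hMc, Matrix.det_mul_column, hprodv, ← RingHom.map_det]
    rw [show Nr.det = G.det * (π' n).eval t from hreal]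
    rfl
  have hGc : (Matrix.of fun i j : Fin m => h (n - m + j) (ε i))
      = Matrix.of fun (i j : Fin m) => cc * (Complex.ofRealHom.mapMatrix G) i j := by
    ext i j
    simp only [Matrix.of_apply, RingHom.mapMatrix_apply, Matrix.map_apply, hG_def]
    rw [hhg, hcc_def]
    rfl
  have hden : (Matrix.of fun i j : Fin m => h (n - m + j) (ε i)).det
      = cc ^ m * Complex.ofReal G.det := by
    rw [hGc]
    rw [Matrix.det_mul_column, Finset.prod_const, Finset.card_univ, Fintype.card_fin,
      ← RingHom.map_det]
    rfl
  rw [hnum, hden, mul_div_mul_left _ _ (pow_ne_zero m hccne), Complex.ofReal_mul,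
    mul_comm (Complex.ofReal G.det), mul_div_assoc,
    div_self (Complex.ofReal_ne_zero.mpr hD), mul_one]
end
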